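/- Let G_1 and G_2 be graphs with E(G_1) ∩ E(G_2) = {e}, where e is a loop of G_i incident with vertex v_i for i = 1,2, e is not a separator of B(G_1), and e is not a separator of B(G_2). If G is the loop-sum of G_1 and G_2 on e (the graph obtained from the disjoint union of G_1 - e and G_2 - e by identifying v_1 with v_2), then B(G) is the 2-sum of B(G_1) and B(G_2) along the basepoint e. -/

import Mathlib

open Matroid Set

namespace Bicirc

variable {α : Type*}

/-- A circuit of a matroid: a minimal dependent set. -/
def Circ (M : Matroid α) (C : Set α) : Prop :=
  M.Dep C ∧ ∀ D, D ⊂ C → M.Indep D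

/-- A cocircuit: a circuit of the dual matroid. -/
def Cocirc (M : Matroid α) (C : Set α) : Prop := Circ M✶ C

/-- Deletion of a set from a matroid. -/
def Del (M : Matroid α) (X : Set α) : Matroid α := M ↾ (M.E \ X)

/-- `e` is a loop of the matroid `M`. -/
def IsLoopE (M : Matroid α) (e : α) : Prop := Circ M {e}

/-- `e` is a coloop of the matroid `M`. -/
def IsColoopE (M : Matroid α) (e : α) : Prop := Cocirc M {e}

/-- A single element is a separator iff it is a loop or a coloop. -/
def SepElem (M : Matroid α) (e : α) : Prop := IsLoopE M e ∨ IsColoopE M e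

/-- The rank of a set in a matroid (as a natural number). -/
noncomputable def rk (M : Matroid α) (X : Set α) : ℕ :=
  sSup {n | ∃ I, M.Indep I ∧ I ⊆ X ∧ n = I.ncard}

/-- The rank of a matroid. -/
noncomputable def rkM (M : Matroid α) : ℕ := rk M M.E

/-- A matroid is connected if it is nonempty and every two distinct elements
lie in a common circuit. -/
def MConn (M : Matroid α) : Prop :=
  M.E.Nonempty ∧ ∀ e ∈ M.E, ∀ f ∈ M.E, e ≠ f → ∃ C, Circ M C ∧ e ∈ C ∧ f ∈ C

/-- `A` gives a `k`-separation `(A, M.E \ A)` of `M`. -/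
def KSep (M : Matroid α) (k : ℕ) (A : Set α) : Prop :=
  A ⊆ M.E ∧ k ≤ A.ncard ∧ k ≤ (M.E \ A).ncard ∧
    rk M A + rk M (M.E \ A) < rkM M + k

/-- A matroid is 3-connected if it has no `k`-separation for `k < 3`. -/
def ThreeConn (M : Matroid α) : Prop := ∀ k, 0 < k → k < 3 → ∀ A, ¬ KSep M k A

/-- Every pair of distinct elements of `C` lies in a common circuit of `M | C`. -/
def PairConn (M : Matroid α) (C : Set α) : Prop :=
  C ⊆ M.E ∧ ∀ e ∈ C, ∀ f ∈ C, e ≠ f → ∃ K, Circ (M ↾ C) K ∧ e ∈ K ∧ f ∈ K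

/-- `C` is a connected component of the matroid `M`. -/
def IsComp (M : Matroid α) (C : Set α) : Prop :=
  C.Nonempty ∧ PairConn M C ∧ ∀ D, PairConn M D → C ⊆ D → D = C

/-- A non-separating cocircuit: deleting it leaves a connected matroid. -/
def NonSepCocirc (M : Matroid α) (K : Set α) : Prop :=
  Cocirc M K ∧ MConn (Del M K)

/-- A cyclic flat: a flat whose restriction has no coloops. -/
def CyclicFlat (M : Matroid α) (Z : Set α) : Prop :=
  M.IsFlat Z ∧ ∀ e ∈ Z, ¬ IsColoopE (M ↾ Z) e

/-- `e` and `f` are clones: every cyclic flat contains one iff it contains the other. -/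
def Clones (M : Matroid α) (e f : α) : Prop :=
  ∀ Z, CyclicFlat M Z → (e ∈ Z ↔ f ∈ Z)

/-- A clonal class: a maximal set of pairwise clone elements. -/
def ClonalClass (M : Matroid α) (F : Set α) : Prop :=
  F ⊆ M.E ∧ (∀ e ∈ F, ∀ f ∈ F, Clones M e f) ∧
    ∀ F', F' ⊆ M.E → (∀ e ∈ F', ∀ f ∈ F', Clones M e f) → F ⊆ F' → F' = F

/-- Disjoint sets `X`, `Y` are skew: no circuit of `M` inside `X ∪ Y` meets both. -/
def Skew (M : Matroid α) (X Y : Set α) : Prop :=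
  ∀ C, Circ M C → C ⊆ X ∪ Y → (C ∩ X = ∅ ∨ C ∩ Y = ∅)

/-- A good cocircuit. -/
def GoodCocirc (M : Matroid α) (K : Set α) : Prop :=
  Cocirc M K ∧ (∃! D, IsComp (Del M K) D ∧ 1 < D.ncard) ∧
    ∀ x, IsColoopE (Del M K) x → ∀ D, IsComp (Del M K) D → 1 < D.ncard →
      ∃ F C, ClonalClass M F ∧ rk M F = 2 ∧ F ⊆ K ∧ Circ M C ∧ x ∈ C ∧
        C ∩ K ⊆ F ∧ (C ∩ K).ncard = 2 ∧ (C ∩ D).Nonempty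

/-! ### Multigraphs -/

/-- A multigraph on vertex type `V` with edge type `E`: each edge has a pair of ends. -/
structure MGraph (V : Type*) (E : Type*) where
  ends : E → Sym2 V

variable {V E : Type*}

/-- The vertices incident with at least one edge of `X`. -/
def VX (G : MGraph V E) (X : Set E) : Set V := {v | ∃ e ∈ X, v ∈ G.ends e}

/-- The set of edges incident with the vertex `v`. -/
def star (G : MGraph V E) (v : V) : Set E := {e | v ∈ G.ends e}

/-- The degree of `v` in the edge set `X` (loops count twice). -/
noncomputable def deg (G : MGraph V E) (X : Set E) (v : V) : ℕ :=
  ({e ∈ X | v ∈ G.ends e}).ncard + ({e ∈ X | G.ends e = s(v, v)}).ncard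

/-- Two edges of `X` sharing a vertex. -/
def EAdj (G : MGraph V E) (X : Set E) (a b : E) : Prop :=
  a ∈ X ∧ b ∈ X ∧ ∃ v, v ∈ G.ends a ∧ v ∈ G.ends b

/-- The subgraph `G[X]` is connected. -/
def ConnOn (G : MGraph V E) (X : Set E) : Prop :=
  ∀ a ∈ X, ∀ b ∈ X, Relation.ReflTransGen (EAdj G X) a b

/-- `C` is the edge set of a cycle of `G`. -/
def IsCycle (G : MGraph V E) (C : Set E) : Prop :=
  C.Nonempty ∧ ConnOn G C ∧ ∀ v ∈ VX G C, deg G C v = 2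

/-- `X` contains no cycle. -/
def Acyclic (G : MGraph V E) (X : Set E) : Prop := ∀ C, C ⊆ X → ¬ IsCycle G C

/-- `X` contains two distinct cycles. -/
def TwoCycles (G : MGraph V E) (X : Set E) : Prop :=
  ∃ C₁ C₂, C₁ ⊆ X ∧ C₂ ⊆ X ∧ IsCycle G C₁ ∧ IsCycle G C₂ ∧ C₁ ≠ C₂

/-- A bicycle: a minimal edge set inducing a connected subgraph with more than one cycle. -/
def IsBicycle (G : MGraph V E) (X : Set E) : Prop :=
  (ConnOn G X ∧ TwoCycles G X) ∧ ∀ Y, Y ⊂ X → ¬ (ConnOn G Y ∧ TwoCycles G Y)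

/-- `P` is the edge set of a path of `G` with end-vertices `u` and `v`. -/
def IsPathBtw (G : MGraph V E) (P : Set E) (u v : V) : Prop :=
  P.Nonempty ∧ ConnOn G P ∧ Acyclic G P ∧ u ≠ v ∧
    deg G P u = 1 ∧ deg G P v = 1 ∧ ∀ w ∈ VX G P, deg G P w ≤ 2

/-- `X` induces a theta subgraph of `G`. -/
def IsTheta (G : MGraph V E) (X : Set E) : Prop :=
  ∃ u v P₁ P₂ P₃, u ≠ v ∧
    IsPathBtw G P₁ u v ∧ IsPathBtw G P₂ u v ∧ IsPathBtw G P₃ u v ∧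
    P₁ ∩ P₂ = ∅ ∧ P₁ ∩ P₃ = ∅ ∧ P₂ ∩ P₃ = ∅ ∧
    VX G P₁ ∩ VX G P₂ = {u, v} ∧ VX G P₁ ∩ VX G P₃ = {u, v} ∧
    VX G P₂ ∩ VX G P₃ = {u, v} ∧ X = P₁ ∪ P₂ ∪ P₃

/-- `X` induces a loose handcuff of `G`. -/
def IsLooseHandcuff (G : MGraph V E) (X : Set E) : Prop :=
  ∃ C₁ C₂ P u v, IsCycle G C₁ ∧ IsCycle G C₂ ∧ VX G C₁ ∩ VX G C₂ = ∅ ∧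
    IsPathBtw G P u v ∧ VX G P ∩ VX G C₁ = {u} ∧ VX G P ∩ VX G C₂ = {v} ∧
    P ∩ C₁ = ∅ ∧ P ∩ C₂ = ∅ ∧ X = C₁ ∪ C₂ ∪ P

/-- `X` induces a tight handcuff of `G`. -/
def IsTightHandcuff (G : MGraph V E) (X : Set E) : Prop :=
  ∃ C₁ C₂ v, IsCycle G C₁ ∧ IsCycle G C₂ ∧ C₁ ∩ C₂ = ∅ ∧
    VX G C₁ ∩ VX G C₂ = {v} ∧ X = C₁ ∪ C₂

/-- Vertex adjacency via an edge. -/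
def VAdj (G : MGraph V E) (u w : V) : Prop := ∃ e, u ∈ G.ends e ∧ w ∈ G.ends e

/-- The graph `G` is connected. -/
def GConn (G : MGraph V E) : Prop := ∀ u w : V, Relation.ReflTransGen (VAdj G) u w

/-- The graph `G - x` is connected. -/
def ConnAvoid (G : MGraph V E) (x : V) : Prop :=
  ∀ u w : V, u ≠ x → w ≠ x →
    Relation.ReflTransGen
      (fun a b => a ≠ x ∧ b ≠ x ∧ ∃ e, x ∉ G.ends e ∧ a ∈ G.ends e ∧ b ∈ G.ends e) u w

/-- `G` is 2-connected: connected and with no cutvertex. -/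
def TwoConnGraph (G : MGraph V E) : Prop := GConn G ∧ ∀ x, ConnAvoid G x

/-- `C` is (the edge set of) a connected component of `G[X]`. -/
def IsGComp (G : MGraph V E) (X C : Set E) : Prop :=
  C ⊆ X ∧ C.Nonempty ∧ ConnOn G C ∧
    ∀ D, D ⊆ X → D.Nonempty → ConnOn G D → C ⊆ D → D = C

/-- The number of acyclic components of `G[X]`. -/
noncomputable def numAcyclicComps (G : MGraph V E) (X : Set E) : ℕ :=
  {C | IsGComp G X C ∧ Acyclic G C}.ncard

/-- `M` is the bicircular matroid of `G`: its circuits are precisely the bicycles. -/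
def IsBicircOf (G : MGraph V E) (M : Matroid E) : Prop :=
  M.E = Set.univ ∧ ∀ C, Circ M C ↔ IsBicycle G C

/-- The edge set `X` contains a pendent edge. -/
def PendentEdge (G : MGraph V E) (X : Set E) : Prop :=
  ∃ e ∈ X, ∃ w ∈ G.ends e, deg G X w = 1

/-- The graph `G - v` is a cycle. -/
def DelVIsCycle (G : MGraph V E) (v : V) : Prop :=
  IsCycle G {e | v ∉ G.ends e} ∧ ∀ w, w ≠ v → w ∈ VX G {e | v ∉ G.ends e}

/-! ### Matroid-labelled trees -/

/-- A matroid-labelled tree. -/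
structure MTree (α : Type*) where
  ι : Type
  fin : Fintype ι
  lab : ι → Matroid α
  adj : ι → ι → Prop
  symm : ∀ i j, adj i j → adj j i
  loopless : ∀ i, ¬ adj i i
  conn : ∀ i j, Relation.ReflTransGen adj i j
  acyc : ∀ i j, adj i j →
    ¬ Relation.ReflTransGen
        (fun a b => adj a b ∧ ¬(a = i ∧ b = j) ∧ ¬(a = j ∧ b = i)) i j
  card3 : (∃ i j : ι, i ≠ j) → ∀ i, 3 ≤ (lab i).E.ncard
  disj : ∀ i j, i ≠ j → ¬ adj i j → (lab i).E ∩ (lab j).E = ∅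
  meet : ∀ i j, adj i j →
    ∃ e, (lab i).E ∩ (lab j).E = {e} ∧ ¬ SepElem (lab i) e ∧ ¬ SepElem (lab j) e

/-- The basepoint elements of a matroid-labelled tree. -/
def MTree.bpts (T : MTree α) : Set α :=
  {e | ∃ i j, T.adj i j ∧ e ∈ (T.lab i).E ∧ e ∈ (T.lab j).E}

/-- The ground set of the matroid `M(T)`. -/
def MTree.ground (T : MTree α) : Set α := (⋃ i, (T.lab i).E) \ T.bpts

/-- The ground-set elements appearing in nodes of `S`. -/
def MTree.elems (T : MTree α) (S : Set T.ι) : Set α :=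
  (⋃ i ∈ S, (T.lab i).E) ∩ T.ground

/-- `S` induces a connected subgraph of the tree. -/
def MTree.SubConn (T : MTree α) (S : Set T.ι) : Prop :=
  ∀ i ∈ S, ∀ j ∈ S,
    Relation.ReflTransGen (fun a b => a ∈ S ∧ b ∈ S ∧ T.adj a b) i j

/-- The circuits of the matroid `M(T)`: glued along a connected subtree. -/
def MTree.IsTreeCircuit (T : MTree α) (C : Set α) : Prop :=
  ∃ (S : Set T.ι) (f : T.ι → Set α), S.Nonempty ∧ T.SubConn S ∧
    (∀ i ∈ S, Circ (T.lab i) (f i)) ∧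
    (∀ i ∈ S, ∀ j, T.adj i j → ∀ e, e ∈ (T.lab i).E → e ∈ (T.lab j).E →
      (e ∈ f i ↔ j ∈ S)) ∧
    C = (⋃ i ∈ S, f i) \ T.bpts

/-- `M = M(T)`. -/
def MTree.IsDecompOf (T : MTree α) (M : Matroid α) : Prop :=
  M.E = T.ground ∧ ∀ C, Circ M C ↔ T.IsTreeCircuit C

/-- A node whose matroid is a circuit. -/
def MTree.CircNode (T : MTree α) (i : T.ι) : Prop := Circ (T.lab i) (T.lab i).E

/-- A node whose matroid is a cocircuit. -/
def MTree.CocircNode (T : MTree α) (i : T.ι) : Prop := Cocirc (T.lab i) (T.lab i).E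

/-- `T` is the canonical (Cunningham–Edmonds) decomposition tree of `M`. -/
def MTree.IsCanonical (T : MTree α) (M : Matroid α) : Prop :=
  T.IsDecompOf M ∧
    (∀ i, ThreeConn (T.lab i) ∨ T.CircNode i ∨ T.CocircNode i) ∧
    ∀ i j, T.adj i j →
      ¬(T.CircNode i ∧ T.CircNode j) ∧ ¬(T.CocircNode i ∧ T.CocircNode j)

/-- The component of `T` minus the edge `{i, j}` containing `i`. -/
def MTree.side (T : MTree α) (i j : T.ι) : Set T.ι :=
  {k | Relation.ReflTransGen
        (fun a b => T.adj a b ∧ ¬(a = i ∧ b = j) ∧ ¬(a = j ∧ b = i)) i k}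

/-- `(A, B)` is displayed by an edge of `T`. -/
def MTree.DispEdge (T : MTree α) (A B : Set α) : Prop :=
  ∃ i j, T.adj i j ∧ A = T.elems (T.side i j) ∧ B = T.elems (T.side j i)

/-- The component of `T - n` containing `k`. -/
def MTree.compAvoid (T : MTree α) (n k : T.ι) : Set T.ι :=
  {k' | Relation.ReflTransGen (fun a b => T.adj a b ∧ a ≠ n ∧ b ≠ n) k k'}

/-- `(A, B)` is displayed by the node `n` of `T`. -/
def MTree.DispNode (T : MTree α) (n : T.ι) (A B : Set α) : Prop :=
  A ∪ B = T.ground ∧ A ∩ B = ∅ ∧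
    ∀ k, k ≠ n →
      (T.elems (T.compAvoid n k) ⊆ A ∨ T.elems (T.compAvoid n k) ⊆ B)

/-- `(A, B)` is a 2-separation of `M`. -/
def TwoSep (M : Matroid α) (A B : Set α) : Prop :=
  A ∪ B = M.E ∧ A ∩ B = ∅ ∧ 2 ≤ A.ncard ∧ 2 ≤ B.ncard ∧
    rk M A + rk M B ≤ rkM M + 1

/-- `X` is 2-separating in `M`. -/
def SepSet2 (M : Matroid α) (X : Set α) : Prop :=
  rk M X + rk M (M.E \ X) ≤ rkM M + 1

/-- A wedge relative to `A`: a maximal 2-separating nonempty proper subset of `M.E \ A`. -/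
def Wedge (M : Matroid α) (A X : Set α) : Prop :=
  X ⊆ M.E \ A ∧ X.Nonempty ∧ X ≠ M.E \ A ∧ SepSet2 M X ∧
    ∀ Y, Y ⊆ M.E \ A → Y.Nonempty → Y ≠ M.E \ A → SepSet2 M Y → X ⊆ Y → Y = X

/-- The rooted matroid `(N, L)` is bicircular: `N = B(H)` for some finite multigraph `H`
in which every element of `L` is a loop. -/
def RootedBicirc (N : Matroid α) (L : Set α) : Prop :=
  ∃ (V : Type) (_ : Fintype V) (_ : N.E.Finite) (G : MGraph V ↥N.E),
    (∀ D, Circ N D ↔ ∃ C : Set ↥N.E, IsBicycle G C ∧ D = Subtype.val '' C) ∧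
    ∀ l : ↥N.E, l.1 ∈ L → (G.ends l).IsDiag

end Bicirc

namespace Bicirc

open Classical in
/-- The map identifying `v₂` with `v₁` in the loop-sum. -/
noncomputable def phiLoop {V₁ V₂ : Type*} (v₁ : V₁) (v₂ : V₂) (v : V₂) :
    V₁ ⊕ {w : V₂ // w ≠ v₂} :=
  if h : v = v₂ then Sum.inl v₁ else Sum.inr ⟨v, h⟩

/-- The loop-sum of `G₁` and `G₂` on the loops `e₁`, `e₂` at `v₁`, `v₂`. -/
noncomputable def loopSum {V₁ E₁ V₂ E₂ : Type*} (G₁ : MGraph V₁ E₁) (G₂ : MGraph V₂ E₂)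
    (e₁ : E₁) (e₂ : E₂) (v₁ : V₁) (v₂ : V₂) :
    MGraph (V₁ ⊕ {w : V₂ // w ≠ v₂}) ({a : E₁ // a ≠ e₁} ⊕ {b : E₂ // b ≠ e₂}) where
  ends := fun f => match f with
    | Sum.inl a => (G₁.ends a.1).map Sum.inl
    | Sum.inr b => (G₂.ends b.1).map (phiLoop v₁ v₂)

/-- Lift a subset of `E₁` into the ground set of the 2-sum. -/
def liftL {E₁ E₂ : Type*} (e₁ : E₁) (e₂ : E₂) (S : Set E₁) :
    Set ({a : E₁ // a ≠ e₁} ⊕ {b : E₂ // b ≠ e₂}) :=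
  {f | ∃ a : {a : E₁ // a ≠ e₁}, a.1 ∈ S ∧ f = Sum.inl a}

/-- Lift a subset of `E₂` into the ground set of the 2-sum. -/
def liftR {E₁ E₂ : Type*} (e₁ : E₁) (e₂ : E₂) (S : Set E₂) :
    Set ({a : E₁ // a ≠ e₁} ⊕ {b : E₂ // b ≠ e₂}) :=
  {f | ∃ b : {b : E₂ // b ≠ e₂}, b.1 ∈ S ∧ f = Sum.inr b}

/-- `C` is a circuit of the 2-sum of `M₁` and `M₂` along the basepoint `e₁ = e₂`. -/
def TwoSumCirc {E₁ E₂ : Type*} (M₁ : Matroid E₁) (M₂ : Matroid E₂) (e₁ : E₁) (e₂ : E₂)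
    (C : Set ({a : E₁ // a ≠ e₁} ⊕ {b : E₂ // b ≠ e₂})) : Prop :=
  (∃ C₁, Circ M₁ C₁ ∧ e₁ ∉ C₁ ∧ C = liftL e₁ e₂ C₁) ∨
  (∃ C₂, Circ M₂ C₂ ∧ e₂ ∉ C₂ ∧ C = liftR e₁ e₂ C₂) ∨
  (∃ C₁ C₂, Circ M₁ C₁ ∧ Circ M₂ C₂ ∧ e₁ ∈ C₁ ∧ e₂ ∈ C₂ ∧
    C = liftL e₁ e₂ C₁ ∪ liftR e₁ e₂ C₂)

end Bicirc

namespace Bicirc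

variable {V E V' E' : Type*}

/-! ### Basic facts about `EAdj` and reachability -/

lemma ends_exists_mem (G : MGraph V E) (x : E) : ∃ v, v ∈ G.ends x := by
  induction G.ends x using Sym2.ind with
  | _ a b => exact ⟨a, Sym2.mem_iff.mpr (Or.inl rfl)⟩

lemma eadj_symm {G : MGraph V E} {X : Set E} : Symmetric (EAdj G X) := by
  rintro a b ⟨ha, hb, v, hva, hvb⟩; exact ⟨hb, ha, v, hvb, hva⟩

lemma rtg_eadj_symm {G : MGraph V E} {X : Set E} {a b : E}
    (h : Relation.ReflTransGen (EAdj G X) a b) : Relation.ReflTransGen (EAdj G X) b a := by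
  haveI : Std.Symm (EAdj G X) := ⟨fun _ _ h => eadj_symm h⟩
  exact Std.Symm.symm _ _ h

lemma eadj_self {G : MGraph V E} {X : Set E} {x : E} (hx : x ∈ X) : EAdj G X x x := by
  obtain ⟨v, hv⟩ := ends_exists_mem G x
  exact ⟨hx, hx, v, hv, hv⟩

lemma eadj_mono {G : MGraph V E} {X Y : Set E} (hXY : X ⊆ Y) {a b : E}
    (h : EAdj G X a b) : EAdj G Y a b :=
  ⟨hXY h.1, hXY h.2.1, h.2.2⟩

lemma eadj_restrict {G : MGraph V E} {X Y : Set E} {a b : E}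
    (h : EAdj G X a b) (ha : a ∈ Y) (hb : b ∈ Y) : EAdj G Y a b :=
  ⟨ha, hb, h.2.2⟩

lemma rtg_mono {G : MGraph V E} {X Y : Set E} (hXY : X ⊆ Y) {a b : E}
    (h : Relation.ReflTransGen (EAdj G X) a b) :
    Relation.ReflTransGen (EAdj G Y) a b :=
  h.lift id (fun _ _ hab => eadj_mono hXY hab)

lemma connOn_of_hub {G : MGraph V E} {X : Set E} (w : V)
    (h : ∀ x ∈ X, ∃ z, z ∈ X ∧ w ∈ G.ends z ∧ Relation.ReflTransGen (EAdj G X) x z) :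
    ConnOn G X := by
  intro a ha b hb
  obtain ⟨za, hza, hwa, hra⟩ := h a ha
  obtain ⟨zb, hzb, hwb, hrb⟩ := h b hb
  have h1 : EAdj G X za zb := ⟨hza, hzb, w, hwa, hwb⟩
  exact (hra.tail h1).trans (rtg_eadj_symm hrb)

lemma rtg_last {α : Type*} {r : α → α → Prop} {a b : α}
    (h : Relation.ReflTransGen r a b) (hne : a ≠ b) : ∃ c, c ≠ b ∧ r c b := by
  induction h with
  | refl => exact absurd rfl hne
  | @tail c d h₁ h₂ ih =>
    by_cases hcd : c = d
    · subst hcd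
      exact ih hne
    · exact ⟨c, hcd, h₂⟩

/-- Reaching `z` from `a ≠ z`: there is an edge of `X \ {z}` sharing a vertex with `z`
reachable from `a` inside `X \ {z}`. -/
lemma reach_attach {G : MGraph V E} {X : Set E} {z a : E}
    (h : Relation.ReflTransGen (EAdj G X) a z) (ha : a ≠ z) (haX : a ∈ X) :
    ∃ c, c ∈ X \ {z} ∧ (∃ v, v ∈ G.ends c ∧ v ∈ G.ends z) ∧
      Relation.ReflTransGen (EAdj G (X \ {z})) a c := by
  induction h using Relation.ReflTransGen.head_induction_on with
  | refl => exact absurd rfl ha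
  | @head x y h₁ h₂ ih =>
    by_cases hy : y = z
    · subst hy
      exact ⟨x, ⟨h₁.1, ha⟩, h₁.2.2, Relation.ReflTransGen.refl⟩
    · obtain ⟨c, hc, hv, hr⟩ := ih hy h₁.2.1
      exact ⟨c, hc, hv, Relation.ReflTransGen.head ⟨⟨h₁.1, ha⟩, ⟨h₁.2.1, hy⟩, h₁.2.2⟩ hr⟩

/-- If a chain leaves `S`, there is a crossing pair, with the exit point reachable
inside `X ∩ S`. -/
lemma reach_exit {G : MGraph V E} {X S : Set E} {a b : E}
    (h : Relation.ReflTransGen (EAdj G X) a b) (ha : a ∈ S) (hb : b ∉ S) :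
    ∃ x y, x ∈ S ∧ y ∉ S ∧ EAdj G X x y ∧
      Relation.ReflTransGen (EAdj G (X ∩ S)) a x := by
  induction h using Relation.ReflTransGen.head_induction_on with
  | refl => exact absurd ha hb
  | @head x y h₁ h₂ ih =>
    by_cases hy : y ∈ S
    · obtain ⟨p, q, hp, hq, hpq, hr⟩ := ih hy
      exact ⟨p, q, hp, hq, hpq,
        Relation.ReflTransGen.head ⟨⟨h₁.1, ha⟩, ⟨h₁.2.1, hy⟩, h₁.2.2⟩ hr⟩
    · exact ⟨x, y, ha, hy, h₁, Relation.ReflTransGen.refl⟩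

/-- Chains from `k` stay in the component of `k`. -/
lemma rtg_upto {G : MGraph V E} {X : Set E} {k : E} :
    ∀ a, Relation.ReflTransGen (EAdj G X) k a →
      Relation.ReflTransGen
        (EAdj G {y | y ∈ X ∧ Relation.ReflTransGen (EAdj G X) k y}) k a := by
  intro a h
  induction h with
  | refl => exact Relation.ReflTransGen.refl
  | @tail c d h₁ h₂ ih =>
    exact ih.tail ⟨⟨h₂.1, h₁⟩, ⟨h₂.2.1, h₁.tail h₂⟩, h₂.2.2⟩

lemma image_ssubset_iff {α β : Type*} {f : α → β} (hf : Function.Injective f)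
    {s t : Set α} : f '' s ⊂ f '' t ↔ s ⊂ t := by
  rw [Set.ssubset_def, Set.ssubset_def, Set.image_subset_image_iff hf,
    Set.image_subset_image_iff hf]

/-! ### Transport of graph notions along embeddings -/

section Transport

variable {G : MGraph V E} {G' : MGraph V' E'} {φ : E → E'} {σ : V → V'}

lemma mem_ends_iff (hσ : Function.Injective σ)
    (hends : ∀ a, G'.ends (φ a) = (G.ends a).map σ) (a : E) (v : V) :
    σ v ∈ G'.ends (φ a) ↔ v ∈ G.ends a := by
  rw [hends]
  constructor
  · intro h
    obtain ⟨b, hb, he⟩ := Sym2.mem_map.mp h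
    rwa [← hσ he]
  · intro h; exact Sym2.mem_map.mpr ⟨v, h, rfl⟩

lemma ends_diag_iff (hσ : Function.Injective σ)
    (hends : ∀ a, G'.ends (φ a) = (G.ends a).map σ) (a : E) (v : V) :
    G'.ends (φ a) = s(σ v, σ v) ↔ G.ends a = s(v, v) := by
  rw [hends, ← Sym2.map_pair_eq]
  exact ⟨fun h => Sym2.map.injective hσ h, fun h => by rw [h]⟩

lemma ends_image_mem (hends : ∀ a, G'.ends (φ a) = (G.ends a).map σ) {a : E} {w : V'}
    (hw : w ∈ G'.ends (φ a)) : ∃ v, v ∈ G.ends a ∧ w = σ v := by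
  rw [hends] at hw
  obtain ⟨v, hv, he⟩ := Sym2.mem_map.mp hw
  exact ⟨v, hv, he.symm⟩

variable (hσ : Function.Injective σ) (hφ : Function.Injective φ)
  (hends : ∀ a, G'.ends (φ a) = (G.ends a).map σ)

include hσ hφ hends

lemma deg_image (S : Set E) (v : V) : deg G' (φ '' S) (σ v) = deg G S v := by
  unfold deg
  have h1 : {e | e ∈ φ '' S ∧ σ v ∈ G'.ends e} = φ '' {e | e ∈ S ∧ v ∈ G.ends e} := by
    ext e'
    constructor
    · rintro ⟨⟨a, ha, rfl⟩, hv⟩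
      exact ⟨a, ⟨ha, (mem_ends_iff hσ hends a v).mp hv⟩, rfl⟩
    · rintro ⟨a, ⟨ha, hv⟩, rfl⟩
      exact ⟨⟨a, ha, rfl⟩, (mem_ends_iff hσ hends a v).mpr hv⟩
  have h2 : {e | e ∈ φ '' S ∧ G'.ends e = s(σ v, σ v)} =
      φ '' {e | e ∈ S ∧ G.ends e = s(v, v)} := by
    ext e'
    constructor
    · rintro ⟨⟨a, ha, rfl⟩, hv⟩
      exact ⟨a, ⟨ha, (ends_diag_iff hσ hends a v).mp hv⟩, rfl⟩
    · rintro ⟨a, ⟨ha, hv⟩, rfl⟩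
      exact ⟨⟨a, ha, rfl⟩, (ends_diag_iff hσ hends a v).mpr hv⟩
  show ({e | e ∈ φ '' S ∧ σ v ∈ G'.ends e}).ncard +
      ({e | e ∈ φ '' S ∧ G'.ends e = s(σ v, σ v)}).ncard = _
  rw [h1, h2, Set.ncard_image_of_injective _ hφ, Set.ncard_image_of_injective _ hφ]

lemma vx_image (S : Set E) : VX G' (φ '' S) = σ '' VX G S := by
  ext w
  constructor
  · rintro ⟨e', ⟨a, ha, rfl⟩, hw⟩
    obtain ⟨v, hv, rfl⟩ := ends_image_mem hends hw
    exact ⟨v, ⟨a, ha, hv⟩, rfl⟩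
  · rintro ⟨v, ⟨a, ha, hv⟩, rfl⟩
    exact ⟨φ a, ⟨a, ha, rfl⟩, (mem_ends_iff hσ hends a v).mpr hv⟩

lemma eadj_image (S : Set E) (a b : E) :
    EAdj G' (φ '' S) (φ a) (φ b) ↔ EAdj G S a b := by
  constructor
  · rintro ⟨ha, hb, w, hwa, hwb⟩
    obtain ⟨a', ha', haa⟩ := ha
    obtain ⟨b', hb', hbb⟩ := hb
    obtain ⟨v, hv, rfl⟩ := ends_image_mem hends hwa
    exact ⟨hφ haa ▸ ha', hφ hbb ▸ hb', v, hv, (mem_ends_iff hσ hends b v).mp hwb⟩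
  · rintro ⟨ha, hb, v, hva, hvb⟩
    exact ⟨⟨a, ha, rfl⟩, ⟨b, hb, rfl⟩, σ v, (mem_ends_iff hσ hends a v).mpr hva,
      (mem_ends_iff hσ hends b v).mpr hvb⟩

lemma rtg_image (S : Set E) (a b : E) :
    Relation.ReflTransGen (EAdj G' (φ '' S)) (φ a) (φ b) ↔
      Relation.ReflTransGen (EAdj G S) a b := by
  constructor
  · intro h
    have key : ∀ y, Relation.ReflTransGen (EAdj G' (φ '' S)) (φ a) y →
        ∀ c, y = φ c → Relation.ReflTransGen (EAdj G S) a c := by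
      intro y h
      induction h with
      | refl => intro c hc; rw [hφ hc]
      | @tail p q h₁ h₂ ih =>
        intro c hc
        subst hc
        obtain ⟨m, hm, rfl⟩ := h₂.1
        exact (ih m rfl).tail ((eadj_image hσ hφ hends S m c).mp h₂)
    exact key _ h b rfl
  · intro h
    exact h.lift φ
      (fun x y hxy => (eadj_image hσ hφ hends S x y).mpr hxy)

lemma connOn_image (S : Set E) : ConnOn G S ↔ ConnOn G' (φ '' S) := by
  constructor
  · rintro h _ ⟨a, ha, rfl⟩ _ ⟨b, hb, rfl⟩
    exact (rtg_image hσ hφ hends S a b).mpr (h a ha b hb)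
  · intro h a ha b hb
    exact (rtg_image hσ hφ hends S a b).mp (h _ ⟨a, ha, rfl⟩ _ ⟨b, hb, rfl⟩)

lemma isCycle_image (S : Set E) : IsCycle G S ↔ IsCycle G' (φ '' S) := by
  constructor
  · rintro ⟨hne, hconn, hdeg⟩
    refine ⟨hne.image φ, (connOn_image hσ hφ hends S).mp hconn, ?_⟩
    intro w hw
    rw [vx_image hσ hφ hends] at hw
    obtain ⟨v, hv, rfl⟩ := hw
    rw [deg_image hσ hφ hends]
    exact hdeg v hv
  · rintro ⟨hne, hconn, hdeg⟩
    refine ⟨?_, (connOn_image hσ hφ hends S).mpr hconn, ?_⟩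
    · obtain ⟨x, hx⟩ := hne
      obtain ⟨a, ha, _⟩ := hx
      exact ⟨a, ha⟩
    · intro v hv
      rw [← deg_image hσ hφ hends]
      exact hdeg (σ v) ((vx_image hσ hφ hends S) ▸ ⟨v, hv, rfl⟩)

lemma twoCycles_image (S : Set E) : TwoCycles G S ↔ TwoCycles G' (φ '' S) := by
  constructor
  · rintro ⟨C₁, C₂, h₁, h₂, hc₁, hc₂, hne⟩
    exact ⟨φ '' C₁, φ '' C₂, Set.image_mono (f := φ) h₁, Set.image_mono (f := φ) h₂,
      (isCycle_image hσ hφ hends C₁).mp hc₁, (isCycle_image hσ hφ hends C₂).mp hc₂,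
      fun h => hne (Set.image_injective.mpr hφ h)⟩
  · rintro ⟨C₁', C₂', h₁, h₂, hc₁, hc₂, hne⟩
    obtain ⟨C₁, hC₁, rfl⟩ := Set.subset_image_iff.mp h₁
    obtain ⟨C₂, hC₂, rfl⟩ := Set.subset_image_iff.mp h₂
    exact ⟨C₁, C₂, hC₁, hC₂, (isCycle_image hσ hφ hends C₁).mpr hc₁,
      (isCycle_image hσ hφ hends C₂).mpr hc₂, fun h => hne (h ▸ rfl)⟩

lemma isBicycle_image (S : Set E) : IsBicycle G S ↔ IsBicycle G' (φ '' S) := by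
  constructor
  · rintro ⟨⟨hconn, htwo⟩, hmin⟩
    refine ⟨⟨(connOn_image hσ hφ hends S).mp hconn,
      (twoCycles_image hσ hφ hends S).mp htwo⟩, ?_⟩
    rintro Y' hY' ⟨hc', ht'⟩
    obtain ⟨Y, hYS, rfl⟩ := Set.subset_image_iff.mp hY'.subset
    have hY : Y ⊂ S := (image_ssubset_iff hφ).mp hY'
    exact hmin Y hY ⟨(connOn_image hσ hφ hends Y).mpr hc',
      (twoCycles_image hσ hφ hends Y).mpr ht'⟩
  · rintro ⟨⟨hconn, htwo⟩, hmin⟩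
    refine ⟨⟨(connOn_image hσ hφ hends S).mpr hconn,
      (twoCycles_image hσ hφ hends S).mpr htwo⟩, ?_⟩
    rintro Y hY ⟨hc, ht⟩
    exact hmin (φ '' Y) ((image_ssubset_iff hφ).mpr hY)
      ⟨(connOn_image hσ hφ hends Y).mp hc, (twoCycles_image hσ hφ hends Y).mp ht⟩

end Transport

/-! ### Handshake lemma -/

lemma vertex_count [Fintype V] (G : MGraph V E) (e : E) :
    ({v | v ∈ G.ends e} : Set V).ncard + ({v | G.ends e = s(v, v)} : Set V).ncard = 2 := by
  induction G.ends e using Sym2.ind with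
  | _ a b =>
    by_cases hab : a = b
    · subst hab
      have h1 : {v | v ∈ s(a, a)} = ({a} : Set V) := by
        ext v; simp [Sym2.mem_iff]
      have h2 : {v | s(a, a) = s(v, v)} = ({a} : Set V) := by
        ext v; constructor
        · intro h; obtain ⟨h', -⟩ := (Sym2.eq_iff.mp h).elim id id; exact h'.symm
        · rintro rfl; rfl
      rw [h1, h2]; simp
    · have h1 : {v | v ∈ s(a, b)} = ({a, b} : Set V) := by
        ext v; simp [Sym2.mem_iff]
      have h2 : {v | s(a, b) = s(v, v)} = (∅ : Set V) := by
        ext v; simp only [Set.mem_setOf_eq, Set.mem_empty_iff_false, iff_false]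
        intro h; rcases Sym2.eq_iff.mp h with ⟨h1, h2⟩ | ⟨h1, h2⟩ <;>
          exact hab (h1.trans h2.symm)
      rw [h1, h2, Set.ncard_pair hab]; simp

lemma ncard_eq_sum {α : Type*} [Fintype α] (s : Set α) [DecidablePred (· ∈ s)] :
    s.ncard = ∑ e : α, if e ∈ s then 1 else 0 := by
  have h : s.toFinite.toFinset = Finset.univ.filter (· ∈ s) := by
    ext x; simp [Set.Finite.mem_toFinset]
  rw [Set.ncard_eq_toFinset_card _ s.toFinite, h, Finset.card_filter]

lemma handshake [Fintype V] [Fintype E] (G : MGraph V E) (X : Set E) :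
    ∑ v : V, deg G X v = 2 * X.ncard := by
  classical
  have hdeg : ∀ v, deg G X v = ∑ e : E, ((if e ∈ X ∧ v ∈ G.ends e then 1 else 0) +
      (if e ∈ X ∧ G.ends e = s(v, v) then 1 else 0)) := by
    intro v
    rw [Finset.sum_add_distrib]
    show ({e | e ∈ X ∧ v ∈ G.ends e}).ncard + ({e | e ∈ X ∧ G.ends e = s(v, v)}).ncard = _
    rw [ncard_eq_sum, ncard_eq_sum]
    rfl
  calc ∑ v : V, deg G X v
      = ∑ e : E, ∑ v : V, ((if e ∈ X ∧ v ∈ G.ends e then 1 else 0) +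
          (if e ∈ X ∧ G.ends e = s(v, v) then 1 else 0)) := by
        rw [← Finset.sum_comm]
        exact Finset.sum_congr rfl fun v _ => hdeg v
    _ = ∑ e : E, if e ∈ X then 2 else 0 := by
        refine Finset.sum_congr rfl fun e _ => ?_
        by_cases he : e ∈ X
        · simp only [he, true_and, if_true]
          have := vertex_count G e
          rw [ncard_eq_sum, ncard_eq_sum] at this
          rw [Finset.sum_add_distrib]
          exact this
        · simp [he]
    _ = 2 * X.ncard := by
        rw [ncard_eq_sum, Finset.mul_sum]
        exact Finset.sum_congr rfl fun e _ => by by_cases he : e ∈ X <;> simp [he]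

/-! ### Cycles and graph loops -/

lemma mem_loop_ends {G : MGraph V E} {ℓ : E} {v : V} (hloop : G.ends ℓ = s(v, v)) :
    v ∈ G.ends ℓ := by rw [hloop]; exact Sym2.mem_iff.mpr (Or.inl rfl)

lemma eq_of_mem_loop_ends {G : MGraph V E} {ℓ : E} {v w : V}
    (hloop : G.ends ℓ = s(v, v)) (hw : w ∈ G.ends ℓ) : w = v := by
  rw [hloop] at hw; rcases Sym2.mem_iff.mp hw with h | h <;> exact h

lemma isCycle_loop [Fintype E] {G : MGraph V E} {ℓ : E} {v : V}
    (hloop : G.ends ℓ = s(v, v)) : IsCycle G {ℓ} := by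
  refine ⟨⟨ℓ, rfl⟩, ?_, ?_⟩
  · rintro a ha b hb
    rw [Set.mem_singleton_iff] at ha hb
    rw [ha, hb]
  · rintro w ⟨x, hx, hw⟩
    rw [Set.mem_singleton_iff] at hx
    rw [hx] at hw
    rw [eq_of_mem_loop_ends hloop hw]
    have h1 : {x | x ∈ ({ℓ} : Set E) ∧ v ∈ G.ends x} = {ℓ} := by
      ext y; constructor
      · rintro ⟨hy, -⟩; exact hy
      · rintro rfl; exact ⟨rfl, mem_loop_ends hloop⟩
    have h2 : {x | x ∈ ({ℓ} : Set E) ∧ G.ends x = s(v, v)} = {ℓ} := by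
      ext y; constructor
      · rintro ⟨hy, -⟩; exact hy
      · rintro rfl; exact ⟨rfl, hloop⟩
    show ({x | x ∈ ({ℓ} : Set E) ∧ v ∈ G.ends x}).ncard +
      ({x | x ∈ ({ℓ} : Set E) ∧ G.ends x = s(v, v)}).ncard = 2
    rw [h1, h2, Set.ncard_singleton]

lemma cycle_of_loop [Fintype E] {G : MGraph V E} {D : Set E} {ℓ : E} {v : V}
    (hloop : G.ends ℓ = s(v, v)) (hD : IsCycle G D) (hℓ : ℓ ∈ D) : D = {ℓ} := by
  obtain ⟨hne, hconn, hdeg⟩ := hD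
  have hdv := hdeg v ⟨ℓ, hℓ, mem_loop_ends hloop⟩
  unfold deg at hdv
  have hℓA : ℓ ∈ {e | e ∈ D ∧ v ∈ G.ends e} := ⟨hℓ, mem_loop_ends hloop⟩
  have hℓB : ℓ ∈ {e | e ∈ D ∧ G.ends e = s(v, v)} := ⟨hℓ, hloop⟩
  have hA1 : 0 < ({e | e ∈ D ∧ v ∈ G.ends e}).ncard :=
    (Set.ncard_pos (Set.toFinite _)).mpr ⟨ℓ, hℓA⟩
  have hB1 : 0 < ({e | e ∈ D ∧ G.ends e = s(v, v)}).ncard :=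
    (Set.ncard_pos (Set.toFinite _)).mpr ⟨ℓ, hℓB⟩
  have hA : ({e | e ∈ D ∧ v ∈ G.ends e}).ncard = 1 := by omega
  obtain ⟨x, hx⟩ := Set.ncard_eq_one.mp hA
  have hxℓ : x = ℓ := by have := hx ▸ hℓA; exact this.symm
  rw [hxℓ] at hx
  ext d
  constructor
  · intro hd
    by_contra hdl
    have hne' : d ≠ ℓ := fun h => hdl h
    obtain ⟨c, hcℓ, hadj⟩ := rtg_last (hconn d hd ℓ hℓ) hne'
    obtain ⟨hcD, -, w, hwc, hwℓ⟩ := hadj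
    have hwv : w = v := eq_of_mem_loop_ends hloop hwℓ
    have hcA : c ∈ {e | e ∈ D ∧ v ∈ G.ends e} := ⟨hcD, hwv ▸ hwc⟩
    rw [hx] at hcA
    exact hcℓ hcA
  · rintro rfl; exact hℓ

/-- A bicycle containing a graph loop has no two distinct cycles avoiding the loop. -/
lemma loop_bicycle_unique_cycle [Fintype E] {G : MGraph V E} {C : Set E} {ℓ : E} {v : V}
    (hloop : G.ends ℓ = s(v, v)) (hC : IsBicycle G C) (hℓ : ℓ ∈ C) :
    ¬ TwoCycles G (C \ {ℓ}) := by
  rintro ⟨K, K', hK, hK', hcK, hcK', hne⟩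
  obtain ⟨⟨hconn, -⟩, hmin⟩ := hC
  obtain ⟨k, hk⟩ := hcK.1
  obtain ⟨k', hk'⟩ := hcK'.1
  have hkY : k ∈ C \ {ℓ} := hK hk
  have hk'Y : k' ∈ C \ {ℓ} := hK' hk'
  set U := {y | y ∈ C \ {ℓ} ∧ Relation.ReflTransGen (EAdj G (C \ {ℓ})) k y} with hU
  set U' := {y | y ∈ C \ {ℓ} ∧ Relation.ReflTransGen (EAdj G (C \ {ℓ})) k' y} with hU'
  have hKU : K ⊆ U := fun x hx => ⟨hK hx, rtg_mono hK (hcK.2.1 k hk x hx)⟩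
  have hK'U : K' ⊆ U' := fun x hx => ⟨hK' hx, rtg_mono hK' (hcK'.2.1 k' hk' x hx)⟩
  have hUY : U ⊆ C \ {ℓ} := fun x hx => hx.1
  have hU'Y : U' ⊆ C \ {ℓ} := fun x hx => hx.1
  -- attachment edges at `v`
  obtain ⟨c, hcY, ⟨w, hwc, hwℓ⟩, hrc⟩ := reach_attach (hconn k hkY.1 ℓ hℓ) hkY.2 hkY.1
  obtain ⟨c', hc'Y, ⟨w', hw'c, hw'ℓ⟩, hrc'⟩ :=
    reach_attach (hconn k' hk'Y.1 ℓ hℓ) hk'Y.2 hk'Y.1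
  have hwv : w = v := eq_of_mem_loop_ends hloop hwℓ
  have hw'v : w' = v := eq_of_mem_loop_ends hloop hw'ℓ
  have hcU : c ∈ U := ⟨hcY, hrc⟩
  have hc'U' : c' ∈ U' := ⟨hc'Y, hrc'⟩
  refine hmin (U ∪ U') ?_ ⟨?_, K, K', hKU.trans Set.subset_union_left,
    hK'U.trans Set.subset_union_right, hcK, hcK', hne⟩
  · refine Set.ssubset_of_subset_of_ssubset (Set.union_subset hUY hU'Y) ?_
    exact Set.sdiff_singleton_ssubset.mpr hℓ
  · refine connOn_of_hub v ?_
    rintro x (hx | hx)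
    · refine ⟨c, Or.inl hcU, hwv ▸ hwc, rtg_mono Set.subset_union_left ?_⟩
      exact (rtg_eadj_symm (rtg_upto x hx.2)).trans
        (rtg_upto c hcU.2)
    · refine ⟨c', Or.inr hc'U', hw'v ▸ hw'c, rtg_mono Set.subset_union_right ?_⟩
      exact (rtg_eadj_symm (rtg_upto x hx.2)).trans
        (rtg_upto c' hc'U'.2)

end Bicirc

namespace Bicirc

/-- `G` minus the edge `e`, with edges indexed by the subtype. -/
def delE {V E : Type*} (G : MGraph V E) (e : E) : MGraph V {a : E // a ≠ e} :=
  ⟨fun a => G.ends a.1⟩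

section LoopSum

variable {V₁ E₁ V₂ E₂ : Type*} {G₁ : MGraph V₁ E₁} {G₂ : MGraph V₂ E₂}
  {e₁ : E₁} {e₂ : E₂} {v₁ : V₁} {v₂ : V₂}

lemma phiLoop_injective : Function.Injective (phiLoop v₁ v₂ : V₂ → V₁ ⊕ {w : V₂ // w ≠ v₂}) := by
  intro a b h
  by_cases ha : a = v₂ <;> by_cases hb : b = v₂
  · rw [ha, hb]
  · simp [phiLoop, ha, hb] at h
  · simp [phiLoop, ha, hb] at h
  · simpa [phiLoop, ha, hb] using h

lemma phiLoop_eq_inl {z : V₂} {u : V₁}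
    (h : phiLoop v₁ v₂ z = Sum.inl u) : u = v₁ ∧ z = v₂ := by
  by_cases hz : z = v₂ <;> simp [phiLoop, hz] at h
  · exact ⟨h.symm, hz⟩

lemma phiLoop_v₂ : phiLoop v₁ v₂ v₂ = Sum.inl v₁ := by simp [phiLoop]

lemma loopSum_ends_inl (a : {a : E₁ // a ≠ e₁}) :
    (loopSum G₁ G₂ e₁ e₂ v₁ v₂).ends (Sum.inl a) =
      ((delE G₁ e₁).ends a).map Sum.inl := rfl

lemma loopSum_ends_inr (b : {b : E₂ // b ≠ e₂}) :
    (loopSum G₁ G₂ e₁ e₂ v₁ v₂).ends (Sum.inr b) =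
      ((delE G₂ e₂).ends b).map (phiLoop v₁ v₂) := rfl

lemma delE_ends_val₁ (a : {a : E₁ // a ≠ e₁}) :
    G₁.ends ((Subtype.val : _ → E₁) a) = ((delE G₁ e₁).ends a).map id := by
  rw [Sym2.map_id]; rfl

lemma delE_ends_val₂ (b : {b : E₂ // b ≠ e₂}) :
    G₂.ends ((Subtype.val : _ → E₂) b) = ((delE G₂ e₂).ends b).map id := by
  rw [Sym2.map_id]; rfl

lemma vertex_of_inl {a : {a : E₁ // a ≠ e₁}} {w : V₁ ⊕ {w : V₂ // w ≠ v₂}}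
    (hw : w ∈ (loopSum G₁ G₂ e₁ e₂ v₁ v₂).ends (Sum.inl a)) : ∃ u, w = Sum.inl u := by
  obtain ⟨u, -, rfl⟩ := ends_image_mem (G := delE G₁ e₁) loopSum_ends_inl hw
  exact ⟨u, rfl⟩

lemma cross_vertex {a : {a : E₁ // a ≠ e₁}} {b : {b : E₂ // b ≠ e₂}}
    {w : V₁ ⊕ {w : V₂ // w ≠ v₂}}
    (hwa : w ∈ (loopSum G₁ G₂ e₁ e₂ v₁ v₂).ends (Sum.inl a))
    (hwb : w ∈ (loopSum G₁ G₂ e₁ e₂ v₁ v₂).ends (Sum.inr b)) : w = Sum.inl v₁ := by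
  obtain ⟨u, -, rfl⟩ := ends_image_mem (G := delE G₁ e₁) loopSum_ends_inl hwa
  obtain ⟨z, -, hz⟩ := ends_image_mem (G := delE G₂ e₂) loopSum_ends_inr hwb
  obtain ⟨hu, -⟩ := phiLoop_eq_inl hz.symm
  rw [hu]

/-- The left part of a set of edges of the loop-sum. -/
lemma side_split (C : Set ({a : E₁ // a ≠ e₁} ⊕ {b : E₂ // b ≠ e₂})) :
    C = Sum.inl '' {a | Sum.inl a ∈ C} ∪ Sum.inr '' {b | Sum.inr b ∈ C} := by
  ext f
  constructor
  · intro hf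
    cases f with
    | inl a => exact Or.inl ⟨a, hf, rfl⟩
    | inr b => exact Or.inr ⟨b, hf, rfl⟩
  · rintro (⟨a, ha, rfl⟩ | ⟨b, hb, rfl⟩)
    · exact ha
    · exact hb

lemma inter_left_eq (Z : Set ({a : E₁ // a ≠ e₁} ⊕ {b : E₂ // b ≠ e₂})) :
    Z ∩ {f | ∃ a, f = Sum.inl a} = Sum.inl '' {a | Sum.inl a ∈ Z} := by
  ext f
  constructor
  · rintro ⟨hfZ, a, rfl⟩
    exact ⟨a, hfZ, rfl⟩
  · rintro ⟨a, ha, rfl⟩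
    exact ⟨ha, a, rfl⟩

lemma inter_right_eq (Z : Set ({a : E₁ // a ≠ e₁} ⊕ {b : E₂ // b ≠ e₂})) :
    Z ∩ {f | ∃ b, f = Sum.inr b} = Sum.inr '' {b | Sum.inr b ∈ Z} := by
  ext f
  constructor
  · rintro ⟨hfZ, b, rfl⟩
    exact ⟨b, hfZ, rfl⟩
  · rintro ⟨b, hb, rfl⟩
    exact ⟨hb, b, rfl⟩

lemma liftL_eq (S : Set E₁) :
    liftL e₁ e₂ S = Sum.inl '' {a : {a : E₁ // a ≠ e₁} | a.1 ∈ S} := by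
  ext f
  constructor
  · rintro ⟨a, ha, rfl⟩; exact ⟨a, ha, rfl⟩
  · rintro ⟨a, ha, rfl⟩; exact ⟨a, ha, rfl⟩

lemma liftR_eq (S : Set E₂) :
    liftR e₁ e₂ S = Sum.inr '' {b : {b : E₂ // b ≠ e₂} | b.1 ∈ S} := by
  ext f
  constructor
  · rintro ⟨b, hb, rfl⟩; exact ⟨b, hb, rfl⟩
  · rintro ⟨b, hb, rfl⟩; exact ⟨b, hb, rfl⟩

section Fin

variable [Fintype V₁] [Fintype E₁] [Fintype V₂] [Fintype E₂]

/-- Every cycle of the loop-sum lies entirely on one side. -/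
lemma cycle_one_side {D : Set ({a : E₁ // a ≠ e₁} ⊕ {b : E₂ // b ≠ e₂})}
    (hD : IsCycle (loopSum G₁ G₂ e₁ e₂ v₁ v₂) D) :
    (∀ f ∈ D, ∃ a, f = Sum.inl a) ∨ (∀ f ∈ D, ∃ b, f = Sum.inr b) := by
  classical
  set H := loopSum G₁ G₂ e₁ e₂ v₁ v₂ with hH
  by_contra hcon
  push_neg at hcon
  obtain ⟨⟨f, hfD, hf⟩, ⟨g, hgD, hg⟩⟩ := hcon
  obtain ⟨b, rfl⟩ : ∃ b, f = Sum.inr b := by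
    cases f with
    | inl a => exact absurd rfl (hf a)
    | inr b => exact ⟨b, rfl⟩
  obtain ⟨a, rfl⟩ : ∃ a, g = Sum.inl a := by
    cases g with
    | inl a => exact ⟨a, rfl⟩
    | inr b => exact absurd rfl (hg b)
  obtain ⟨hne, hconn, hdeg⟩ := hD
  obtain ⟨x, y, hxS, hyS, hxy, -⟩ :=
    reach_exit (S := {f | ∃ b, f = Sum.inr b}) (hconn _ hfD _ hgD) ⟨b, rfl⟩
      (by rintro ⟨b', hb'⟩; exact nomatch hb')
  obtain ⟨b', rfl⟩ := hxS
  obtain ⟨a', rfl⟩ : ∃ a', y = Sum.inl a' := by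
    cases y with
    | inl a' => exact ⟨a', rfl⟩
    | inr b'' => exact absurd ⟨b'', rfl⟩ hyS
  obtain ⟨hxD, hyD, w, hwx, hwy⟩ := hxy
  have hw : w = Sum.inl v₁ := cross_vertex hwy hwx
  rw [hw] at hwx hwy
  have hd2 : deg H D (Sum.inl v₁) = 2 := hdeg _ ⟨_, hxD, hwx⟩
  have hPQ : ({e | e ∈ D ∧ Sum.inl v₁ ∈ H.ends e}).ncard +
      ({e | e ∈ D ∧ H.ends e = s(Sum.inl v₁, Sum.inl v₁)}).ncard = 2 := hd2
  have hpair : ({Sum.inl a', Sum.inr b'} :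
      Set ({a : E₁ // a ≠ e₁} ⊕ {b : E₂ // b ≠ e₂})) ⊆
      {e | e ∈ D ∧ Sum.inl v₁ ∈ H.ends e} := by
    rintro e (rfl | rfl)
    · exact ⟨hyD, hwy⟩
    · exact ⟨hxD, hwx⟩
  have hP2 : 2 ≤ ({e | e ∈ D ∧ Sum.inl v₁ ∈ H.ends e}).ncard := by
    have := Set.ncard_le_ncard hpair (Set.toFinite _)
    rwa [Set.ncard_pair (by simp)] at this
  have hPeq : {e | e ∈ D ∧ Sum.inl v₁ ∈ H.ends e} =
      ({Sum.inl a', Sum.inr b'} : Set _) := by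
    refine (Set.eq_of_subset_of_ncard_le hpair ?_ (Set.toFinite _)).symm
    rw [Set.ncard_pair (by simp)]
    omega
  have hQ : {e | e ∈ D ∧ H.ends e = s(Sum.inl v₁, Sum.inl v₁)} = ∅ := by
    have hq : ({e | e ∈ D ∧ H.ends e = s(Sum.inl v₁, Sum.inl v₁)}).ncard = 0 := by omega
    exact (Set.ncard_eq_zero (Set.toFinite _)).mp hq
  -- the left part of D
  set D₁ := {e | e ∈ D ∧ ∃ a, e = Sum.inl a} with hD₁
  have hhs := handshake H D₁
  -- degree of the hub in the left part is 1
  have hdeg1 : deg H D₁ (Sum.inl v₁) = 1 := by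
    have hA : {e | e ∈ D₁ ∧ Sum.inl v₁ ∈ H.ends e} = {Sum.inl a'} := by
      ext e
      constructor
      · rintro ⟨⟨heD, a'', rfl⟩, hv⟩
        have : Sum.inl a'' ∈ ({Sum.inl a', Sum.inr b'} : Set _) := hPeq ▸ ⟨heD, hv⟩
        rcases this with h | h
        · exact h
        · exact absurd h (by simp)
      · rintro rfl
        exact ⟨⟨hyD, a', rfl⟩, hwy⟩
    have hB : {e | e ∈ D₁ ∧ H.ends e = s(Sum.inl v₁, Sum.inl v₁)} = ∅ := by
      rw [Set.eq_empty_iff_forall_notMem]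
      rintro e ⟨⟨heD, -⟩, hv⟩
      exact (Set.eq_empty_iff_forall_notMem.mp hQ) e ⟨heD, hv⟩
    show ({e | e ∈ D₁ ∧ Sum.inl v₁ ∈ H.ends e}).ncard +
      ({e | e ∈ D₁ ∧ H.ends e = s(Sum.inl v₁, Sum.inl v₁)}).ncard = 1
    rw [hA, hB, Set.ncard_singleton, Set.ncard_empty]
  -- all other degrees in the left part are even
  have hother : ∀ u, u ≠ Sum.inl v₁ → Even (deg H D₁ u) := by
    intro u hu
    cases u with
    | inr z =>
      have hA : {e | e ∈ D₁ ∧ Sum.inr z ∈ H.ends e} = ∅ := by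
        rw [Set.eq_empty_iff_forall_notMem]
        rintro e ⟨⟨-, a'', rfl⟩, hv⟩
        obtain ⟨u', hu'⟩ := vertex_of_inl hv
        exact nomatch hu'
      have hB : {e | e ∈ D₁ ∧ H.ends e = s(Sum.inr z, Sum.inr z)} = ∅ := by
        rw [Set.eq_empty_iff_forall_notMem]
        rintro e ⟨⟨-, a'', rfl⟩, hv⟩
        obtain ⟨u', hu'⟩ := vertex_of_inl (hv ▸ Sym2.mem_iff.mpr (Or.inl rfl))
        exact nomatch hu'
      have : deg H D₁ (Sum.inr z) = 0 := by
        show ({e | e ∈ D₁ ∧ Sum.inr z ∈ H.ends e}).ncard +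
          ({e | e ∈ D₁ ∧ H.ends e = s(Sum.inr z, Sum.inr z)}).ncard = 0
        rw [hA, hB, Set.ncard_empty]
      rw [this]
      exact Even.zero
    | inl u' =>
      have huv : u' ≠ v₁ := fun h => hu (by rw [h])
      -- membership in left-part edge sets agrees with D
      have hmem : ∀ e ∈ D, Sum.inl u' ∈ H.ends e → e ∈ D₁ := by
        intro e heD hv
        refine ⟨heD, ?_⟩
        cases e with
        | inl a'' => exact ⟨a'', rfl⟩
        | inr b'' =>
          obtain ⟨z, -, hz⟩ := ends_image_mem (G := delE G₂ e₂) loopSum_ends_inr hv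
          obtain ⟨h1, -⟩ := phiLoop_eq_inl hz.symm
          exact absurd h1 huv
      have hA : {e | e ∈ D₁ ∧ Sum.inl u' ∈ H.ends e} =
          {e | e ∈ D ∧ Sum.inl u' ∈ H.ends e} := by
        ext e
        exact ⟨fun h => ⟨h.1.1, h.2⟩, fun h => ⟨hmem e h.1 h.2, h.2⟩⟩
      have hB : {e | e ∈ D₁ ∧ H.ends e = s(Sum.inl u', Sum.inl u')} =
          {e | e ∈ D ∧ H.ends e = s(Sum.inl u', Sum.inl u')} := by
        ext e
        refine ⟨fun h => ⟨h.1.1, h.2⟩, fun h =>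
          ⟨hmem e h.1 (h.2 ▸ Sym2.mem_iff.mpr (Or.inl rfl)), h.2⟩⟩
      have hDD : deg H D₁ (Sum.inl u') = deg H D (Sum.inl u') := by
        show ({e | e ∈ D₁ ∧ Sum.inl u' ∈ H.ends e}).ncard +
          ({e | e ∈ D₁ ∧ H.ends e = s(Sum.inl u', Sum.inl u')}).ncard =
          ({e | e ∈ D ∧ Sum.inl u' ∈ H.ends e}).ncard +
          ({e | e ∈ D ∧ H.ends e = s(Sum.inl u', Sum.inl u')}).ncard
        rw [hA, hB]
      rw [hDD]
      by_cases hvx : Sum.inl u' ∈ VX H D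
      · rw [hdeg _ hvx]
        exact even_two
      · have h0 : deg H D (Sum.inl u') = 0 := by
          have hA0 : {e | e ∈ D ∧ Sum.inl u' ∈ H.ends e} = ∅ := by
            rw [Set.eq_empty_iff_forall_notMem]
            rintro e ⟨heD, hv⟩
            exact hvx ⟨e, heD, hv⟩
          have hB0 : {e | e ∈ D ∧ H.ends e = s(Sum.inl u', Sum.inl u')} = ∅ := by
            rw [Set.eq_empty_iff_forall_notMem]
            rintro e ⟨heD, hv⟩
            exact hvx ⟨e, heD, hv ▸ Sym2.mem_iff.mpr (Or.inl rfl)⟩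
          show ({e | e ∈ D ∧ Sum.inl u' ∈ H.ends e}).ncard +
            ({e | e ∈ D ∧ H.ends e = s(Sum.inl u', Sum.inl u')}).ncard = 0
          rw [hA0, hB0, Set.ncard_empty]
        rw [h0]
        exact Even.zero
  -- parity contradiction
  have hsplit : deg H D₁ (Sum.inl v₁) +
      ∑ u ∈ Finset.univ.erase (Sum.inl v₁), deg H D₁ u =
      ∑ u : V₁ ⊕ {w : V₂ // w ≠ v₂}, deg H D₁ u :=
    Finset.add_sum_erase Finset.univ (deg H D₁) (Finset.mem_univ _)
  have heven : Even (∑ u ∈ Finset.univ.erase (Sum.inl v₁), deg H D₁ u) :=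
    Finset.even_sum _ (fun u hu => hother u (Finset.ne_of_mem_erase hu))
  obtain ⟨m, hm⟩ := heven
  rw [hhs, hdeg1, hm] at hsplit
  omega

/-- Reaching a hub edge on the left side. -/
lemma reach_w0_left {Z : Set ({a : E₁ // a ≠ e₁} ⊕ {b : E₂ // b ≠ e₂})}
    (hconn : ConnOn (loopSum G₁ G₂ e₁ e₂ v₁ v₂) Z)
    (hR : ∃ b, Sum.inr b ∈ Z) {a : {a : E₁ // a ≠ e₁}} (ha : Sum.inl a ∈ Z) :
    ∃ x, Sum.inl x ∈ Z ∧ Sum.inl v₁ ∈ (loopSum G₁ G₂ e₁ e₂ v₁ v₂).ends (Sum.inl x) ∧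
      Relation.ReflTransGen (EAdj (loopSum G₁ G₂ e₁ e₂ v₁ v₂)
        (Sum.inl '' {a | Sum.inl a ∈ Z})) (Sum.inl a) (Sum.inl x) := by
  obtain ⟨b, hb⟩ := hR
  obtain ⟨x, y, hxS, hyS, hxy, hrtg⟩ :=
    reach_exit (S := {f | ∃ a', f = Sum.inl a'}) (hconn _ ha _ hb) ⟨a, rfl⟩
      (by rintro ⟨a', ha'⟩; exact nomatch ha')
  obtain ⟨x', rfl⟩ := hxS
  obtain ⟨y', rfl⟩ : ∃ y', y = Sum.inr y' := by
    cases y with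
    | inl a' => exact absurd ⟨a', rfl⟩ hyS
    | inr b' => exact ⟨b', rfl⟩
  obtain ⟨hxZ, hyZ, w, hwx, hwy⟩ := hxy
  have hw := cross_vertex hwx hwy
  rw [hw] at hwx
  rw [inter_left_eq] at hrtg
  exact ⟨x', hxZ, hwx, hrtg⟩

/-- Reaching a hub edge on the right side. -/
lemma reach_w0_right {Z : Set ({a : E₁ // a ≠ e₁} ⊕ {b : E₂ // b ≠ e₂})}
    (hconn : ConnOn (loopSum G₁ G₂ e₁ e₂ v₁ v₂) Z)
    (hL : ∃ a, Sum.inl a ∈ Z) {b : {b : E₂ // b ≠ e₂}} (hb : Sum.inr b ∈ Z) :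
    ∃ x, Sum.inr x ∈ Z ∧ Sum.inl v₁ ∈ (loopSum G₁ G₂ e₁ e₂ v₁ v₂).ends (Sum.inr x) ∧
      Relation.ReflTransGen (EAdj (loopSum G₁ G₂ e₁ e₂ v₁ v₂)
        (Sum.inr '' {b | Sum.inr b ∈ Z})) (Sum.inr b) (Sum.inr x) := by
  obtain ⟨a, ha⟩ := hL
  obtain ⟨x, y, hxS, hyS, hxy, hrtg⟩ :=
    reach_exit (S := {f | ∃ b', f = Sum.inr b'}) (hconn _ hb _ ha) ⟨b, rfl⟩
      (by rintro ⟨b', hb'⟩; exact nomatch hb')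
  obtain ⟨x', rfl⟩ := hxS
  obtain ⟨y', rfl⟩ : ∃ y', y = Sum.inl y' := by
    cases y with
    | inl a' => exact ⟨a', rfl⟩
    | inr b' => exact absurd ⟨b', rfl⟩ hyS
  obtain ⟨hxZ, hyZ, w, hwx, hwy⟩ := hxy
  have hw := cross_vertex hwy hwx
  rw [hw] at hwx
  rw [inter_right_eq] at hrtg
  exact ⟨x', hxZ, hwx, hrtg⟩

lemma left_set_eq {K : Set ({a : E₁ // a ≠ e₁} ⊕ {b : E₂ // b ≠ e₂})}
    (h : ∀ f ∈ K, ∃ a, f = Sum.inl a) : K = Sum.inl '' {a | Sum.inl a ∈ K} := by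
  ext f
  constructor
  · intro hf
    obtain ⟨a, rfl⟩ := h f hf
    exact ⟨a, hf, rfl⟩
  · rintro ⟨a, ha, rfl⟩
    exact ha

lemma right_set_eq {K : Set ({a : E₁ // a ≠ e₁} ⊕ {b : E₂ // b ≠ e₂})}
    (h : ∀ f ∈ K, ∃ b, f = Sum.inr b) : K = Sum.inr '' {b | Sum.inr b ∈ K} := by
  ext f
  constructor
  · intro hf
    obtain ⟨b, rfl⟩ := h f hf
    exact ⟨b, hf, rfl⟩
  · rintro ⟨b, hb, rfl⟩
    exact hb

lemma val_image_setOf {E₀ : Type*} {e : E₀} (S : Set E₀) :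
    Subtype.val '' {a : {x : E₀ // x ≠ e} | a.1 ∈ S} = S \ {e} := by
  ext x
  constructor
  · rintro ⟨a, ha, rfl⟩
    exact ⟨ha, a.2⟩
  · rintro ⟨hx, hxe⟩
    exact ⟨⟨x, hxe⟩, hx, rfl⟩

lemma val_preim_image {E₀ : Type*} {e : E₀} (S : Set {x : E₀ // x ≠ e}) :
    {a : {x : E₀ // x ≠ e} | a.1 ∈ Subtype.val '' S} = S := by
  ext a
  simp only [Set.mem_setOf_eq]
  exact Subtype.val_injective.mem_set_image

/-! ### Transport shorthands for the two sides -/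

lemma memends_left (x : {a : E₁ // a ≠ e₁}) (v : V₁) :
    v ∈ G₁.ends x.1 ↔
      Sum.inl v ∈ (loopSum G₁ G₂ e₁ e₂ v₁ v₂).ends (Sum.inl x) :=
  (mem_ends_iff (G := delE G₁ e₁) Sum.inl_injective loopSum_ends_inl x v).symm

lemma memends_right (b : {b : E₂ // b ≠ e₂}) :
    v₂ ∈ G₂.ends b.1 ↔
      Sum.inl v₁ ∈ (loopSum G₁ G₂ e₁ e₂ v₁ v₂).ends (Sum.inr b) := by
  rw [← phiLoop_v₂ (v₁ := v₁)]
  exact (mem_ends_iff (G := delE G₂ e₂) phiLoop_injective loopSum_ends_inr b v₂).symm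

lemma conn_left (S : Set {a : E₁ // a ≠ e₁}) :
    ConnOn G₁ (Subtype.val '' S) ↔
      ConnOn (loopSum G₁ G₂ e₁ e₂ v₁ v₂) (Sum.inl '' S) :=
  ((connOn_image (G := delE G₁ e₁) Function.injective_id Subtype.val_injective
    delE_ends_val₁ S).symm).trans
    (connOn_image Sum.inl_injective Sum.inl_injective loopSum_ends_inl S)

lemma conn_right (S : Set {b : E₂ // b ≠ e₂}) :
    ConnOn G₂ (Subtype.val '' S) ↔
      ConnOn (loopSum G₁ G₂ e₁ e₂ v₁ v₂) (Sum.inr '' S) :=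
  ((connOn_image (G := delE G₂ e₂) Function.injective_id Subtype.val_injective
    delE_ends_val₂ S).symm).trans
    (connOn_image phiLoop_injective Sum.inr_injective loopSum_ends_inr S)

lemma two_left (S : Set {a : E₁ // a ≠ e₁}) :
    TwoCycles G₁ (Subtype.val '' S) ↔
      TwoCycles (loopSum G₁ G₂ e₁ e₂ v₁ v₂) (Sum.inl '' S) :=
  ((twoCycles_image (G := delE G₁ e₁) Function.injective_id Subtype.val_injective
    delE_ends_val₁ S).symm).trans
    (twoCycles_image Sum.inl_injective Sum.inl_injective loopSum_ends_inl S)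

lemma two_right (S : Set {b : E₂ // b ≠ e₂}) :
    TwoCycles G₂ (Subtype.val '' S) ↔
      TwoCycles (loopSum G₁ G₂ e₁ e₂ v₁ v₂) (Sum.inr '' S) :=
  ((twoCycles_image (G := delE G₂ e₂) Function.injective_id Subtype.val_injective
    delE_ends_val₂ S).symm).trans
    (twoCycles_image phiLoop_injective Sum.inr_injective loopSum_ends_inr S)

lemma cyc_left (S : Set {a : E₁ // a ≠ e₁}) :
    IsCycle G₁ (Subtype.val '' S) ↔
      IsCycle (loopSum G₁ G₂ e₁ e₂ v₁ v₂) (Sum.inl '' S) :=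
  ((isCycle_image (G := delE G₁ e₁) Function.injective_id Subtype.val_injective
    delE_ends_val₁ S).symm).trans
    (isCycle_image Sum.inl_injective Sum.inl_injective loopSum_ends_inl S)

lemma cyc_right (S : Set {b : E₂ // b ≠ e₂}) :
    IsCycle G₂ (Subtype.val '' S) ↔
      IsCycle (loopSum G₁ G₂ e₁ e₂ v₁ v₂) (Sum.inr '' S) :=
  ((isCycle_image (G := delE G₂ e₂) Function.injective_id Subtype.val_injective
    delE_ends_val₂ S).symm).trans
    (isCycle_image phiLoop_injective Sum.inr_injective loopSum_ends_inr S)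

lemma bike_left (S : Set {a : E₁ // a ≠ e₁}) :
    IsBicycle G₁ (Subtype.val '' S) ↔
      IsBicycle (loopSum G₁ G₂ e₁ e₂ v₁ v₂) (Sum.inl '' S) :=
  ((isBicycle_image (G := delE G₁ e₁) Function.injective_id Subtype.val_injective
    delE_ends_val₁ S).symm).trans
    (isBicycle_image Sum.inl_injective Sum.inl_injective loopSum_ends_inl S)

lemma bike_right (S : Set {b : E₂ // b ≠ e₂}) :
    IsBicycle G₂ (Subtype.val '' S) ↔
      IsBicycle (loopSum G₁ G₂ e₁ e₂ v₁ v₂) (Sum.inr '' S) :=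
  ((isBicycle_image (G := delE G₂ e₂) Function.injective_id Subtype.val_injective
    delE_ends_val₂ S).symm).trans
    (isBicycle_image phiLoop_injective Sum.inr_injective loopSum_ends_inr S)

lemma rtg_left (S : Set {a : E₁ // a ≠ e₁}) (a x : {a : E₁ // a ≠ e₁}) :
    Relation.ReflTransGen (EAdj G₁ (Subtype.val '' S)) a.1 x.1 ↔
      Relation.ReflTransGen (EAdj (loopSum G₁ G₂ e₁ e₂ v₁ v₂) (Sum.inl '' S))
        (Sum.inl a) (Sum.inl x) :=
  ((rtg_image (G := delE G₁ e₁) Function.injective_id Subtype.val_injective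
    delE_ends_val₁ S a x)).trans
    ((rtg_image Sum.inl_injective Sum.inl_injective loopSum_ends_inl S a x).symm)

lemma rtg_right (S : Set {b : E₂ // b ≠ e₂}) (b x : {b : E₂ // b ≠ e₂}) :
    Relation.ReflTransGen (EAdj G₂ (Subtype.val '' S)) b.1 x.1 ↔
      Relation.ReflTransGen (EAdj (loopSum G₁ G₂ e₁ e₂ v₁ v₂) (Sum.inr '' S))
        (Sum.inr b) (Sum.inr x) :=
  ((rtg_image (G := delE G₂ e₂) Function.injective_id Subtype.val_injective
    delE_ends_val₂ S b x)).trans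
    ((rtg_image phiLoop_injective Sum.inr_injective loopSum_ends_inr S b x).symm)

/-- In a mixed bicycle, both sides contain a cycle. -/
lemma both_sides_cycle {C : Set ({a : E₁ // a ≠ e₁} ⊕ {b : E₂ // b ≠ e₂})}
    (hC : IsBicycle (loopSum G₁ G₂ e₁ e₂ v₁ v₂) C)
    (hL : {a | Sum.inl a ∈ C}.Nonempty) (hR : {b | Sum.inr b ∈ C}.Nonempty) :
    (∃ KL, KL ⊆ {a | Sum.inl a ∈ C} ∧ KL.Nonempty ∧
        IsCycle (loopSum G₁ G₂ e₁ e₂ v₁ v₂) (Sum.inl '' KL)) ∧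
    (∃ KR, KR ⊆ {b | Sum.inr b ∈ C} ∧ KR.Nonempty ∧
        IsCycle (loopSum G₁ G₂ e₁ e₂ v₁ v₂) (Sum.inr '' KR)) := by
  obtain ⟨⟨hconn, K₁, K₂, hK₁C, hK₂C, hcK₁, hcK₂, hKne⟩, hmin⟩ := hC
  -- connectivity of each side, via the hub
  have hconnL : ConnOn (loopSum G₁ G₂ e₁ e₂ v₁ v₂) (Sum.inl '' {a | Sum.inl a ∈ C}) := by
    refine connOn_of_hub (Sum.inl v₁) ?_
    rintro f ⟨a, ha, rfl⟩
    obtain ⟨x, hxZ, hwx, hrtg⟩ := reach_w0_left hconn ⟨hR.some, hR.some_mem⟩ ha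
    exact ⟨Sum.inl x, ⟨x, hxZ, rfl⟩, hwx, hrtg⟩
  have hconnR : ConnOn (loopSum G₁ G₂ e₁ e₂ v₁ v₂) (Sum.inr '' {b | Sum.inr b ∈ C}) := by
    refine connOn_of_hub (Sum.inl v₁) ?_
    rintro f ⟨b, hb, rfl⟩
    obtain ⟨x, hxZ, hwx, hrtg⟩ := reach_w0_right hconn ⟨hL.some, hL.some_mem⟩ hb
    exact ⟨Sum.inr x, ⟨x, hxZ, rfl⟩, hwx, hrtg⟩
  -- each cycle lives on one side
  have hside₁ := cycle_one_side hcK₁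
  have hside₂ := cycle_one_side hcK₂
  have hLsub : ∀ {K : Set ({a : E₁ // a ≠ e₁} ⊕ {b : E₂ // b ≠ e₂})}, K ⊆ C →
      (∀ f ∈ K, ∃ a, f = Sum.inl a) → K ⊆ Sum.inl '' {a | Sum.inl a ∈ C} := by
    intro K hKC hKs f hf
    obtain ⟨a, rfl⟩ := hKs f hf
    exact ⟨a, hKC hf, rfl⟩
  have hRsub : ∀ {K : Set ({a : E₁ // a ≠ e₁} ⊕ {b : E₂ // b ≠ e₂})}, K ⊆ C →
      (∀ f ∈ K, ∃ b, f = Sum.inr b) → K ⊆ Sum.inr '' {b | Sum.inr b ∈ C} := by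
    intro K hKC hKs f hf
    obtain ⟨b, rfl⟩ := hKs f hf
    exact ⟨b, hKC hf, rfl⟩
  -- not both cycles on the same side
  have hnotL : ¬ ((∀ f ∈ K₁, ∃ a, f = Sum.inl a) ∧ (∀ f ∈ K₂, ∃ a, f = Sum.inl a)) := by
    rintro ⟨h1, h2⟩
    refine hmin (Sum.inl '' {a | Sum.inl a ∈ C}) ⟨?_, ?_⟩
      ⟨hconnL, K₁, K₂, hLsub hK₁C h1, hLsub hK₂C h2, hcK₁, hcK₂, hKne⟩
    · rintro f ⟨a, ha, rfl⟩; exact ha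
    · intro hsub
      obtain ⟨a', -, heq⟩ := hsub (hR.some_mem : Sum.inr hR.some ∈ C)
      exact nomatch heq
  have hnotR : ¬ ((∀ f ∈ K₁, ∃ b, f = Sum.inr b) ∧ (∀ f ∈ K₂, ∃ b, f = Sum.inr b)) := by
    rintro ⟨h1, h2⟩
    refine hmin (Sum.inr '' {b | Sum.inr b ∈ C}) ⟨?_, ?_⟩
      ⟨hconnR, K₁, K₂, hRsub hK₁C h1, hRsub hK₂C h2, hcK₁, hcK₂, hKne⟩
    · rintro f ⟨b, hb, rfl⟩; exact hb
    · intro hsub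
      obtain ⟨b', -, heq⟩ := hsub (hL.some_mem : Sum.inl hL.some ∈ C)
      exact nomatch heq
  -- extract one cycle on each side
  have hmk : ∀ {K : Set ({a : E₁ // a ≠ e₁} ⊕ {b : E₂ // b ≠ e₂})}, K ⊆ C →
      IsCycle (loopSum G₁ G₂ e₁ e₂ v₁ v₂) K → (∀ f ∈ K, ∃ a, f = Sum.inl a) →
      ∃ KL, KL ⊆ {a | Sum.inl a ∈ C} ∧ KL.Nonempty ∧
        IsCycle (loopSum G₁ G₂ e₁ e₂ v₁ v₂) (Sum.inl '' KL) := by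
    intro K hKC hcK hKs
    refine ⟨{a | Sum.inl a ∈ K}, fun a ha => hKC ha, ?_, ?_⟩
    · obtain ⟨f, hf⟩ := hcK.1
      obtain ⟨a, rfl⟩ := hKs f hf
      exact ⟨a, hf⟩
    · rwa [← left_set_eq hKs]
  have hmk' : ∀ {K : Set ({a : E₁ // a ≠ e₁} ⊕ {b : E₂ // b ≠ e₂})}, K ⊆ C →
      IsCycle (loopSum G₁ G₂ e₁ e₂ v₁ v₂) K → (∀ f ∈ K, ∃ b, f = Sum.inr b) →
      ∃ KR, KR ⊆ {b | Sum.inr b ∈ C} ∧ KR.Nonempty ∧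
        IsCycle (loopSum G₁ G₂ e₁ e₂ v₁ v₂) (Sum.inr '' KR) := by
    intro K hKC hcK hKs
    refine ⟨{b | Sum.inr b ∈ K}, fun b hb => hKC hb, ?_, ?_⟩
    · obtain ⟨f, hf⟩ := hcK.1
      obtain ⟨b, rfl⟩ := hKs f hf
      exact ⟨b, hf⟩
    · rwa [← right_set_eq hKs]
  rcases hside₁ with h1 | h1 <;> rcases hside₂ with h2 | h2
  · exact absurd ⟨h1, h2⟩ hnotL
  · exact ⟨hmk hK₁C hcK₁ h1, hmk' hK₂C hcK₂ h2⟩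
  · exact ⟨hmk hK₂C hcK₂ h2, hmk' hK₁C hcK₁ h1⟩
  · exact absurd ⟨h1, h2⟩ hnotR

lemma exists_cycle_avoiding {V E : Type*} [Fintype E] {G : MGraph V E} {X : Set E}
    {ℓ : E} {v : V} (hloop : G.ends ℓ = s(v, v)) (htwo : TwoCycles G X) :
    ∃ K, K ⊆ X \ {ℓ} ∧ IsCycle G K := by
  obtain ⟨Ka, Kb, hKaY, hKbY, hcKa, hcKb, hKab⟩ := htwo
  by_cases hKa : ℓ ∈ Ka
  · have hKaeq := cycle_of_loop hloop hcKa hKa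
    have hKbe : ℓ ∉ Kb := fun hKb =>
      hKab (hKaeq.trans (cycle_of_loop hloop hcKb hKb).symm)
    exact ⟨Kb, fun x hx => ⟨hKbY hx, fun he => hKbe (he ▸ hx)⟩, hcKb⟩
  · exact ⟨Ka, fun x hx => ⟨hKaY hx, fun he => hKa (he ▸ hx)⟩, hcKa⟩

/-- In a mixed bicycle, the left part plus the loop is a bicycle of `G₁`. -/
lemma mixed_left (hloop₁ : G₁.ends e₁ = s(v₁, v₁))
    {C : Set ({a : E₁ // a ≠ e₁} ⊕ {b : E₂ // b ≠ e₂})}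
    (hC : IsBicycle (loopSum G₁ G₂ e₁ e₂ v₁ v₂) C)
    (hL : {a | Sum.inl a ∈ C}.Nonempty) (hR : {b | Sum.inr b ∈ C}.Nonempty) :
    IsBicycle G₁ (Subtype.val '' {a | Sum.inl a ∈ C} ∪ {e₁}) := by
  obtain ⟨⟨KL, hKLsub, hKLne, hKLcyc⟩, KR, hKRsub, hKRne, hKRcyc⟩ :=
    both_sides_cycle hC hL hR
  obtain ⟨⟨hconn, htwo⟩, hmin⟩ := hC
  have hreach : ∀ a ∈ {a | Sum.inl a ∈ C}, ∃ x ∈ {a | Sum.inl a ∈ C},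
      v₁ ∈ G₁.ends x.1 ∧ Relation.ReflTransGen
        (EAdj G₁ (Subtype.val '' {a | Sum.inl a ∈ C})) a.1 x.1 := by
    intro a ha
    obtain ⟨x, hxZ, hwx, hrtg⟩ := reach_w0_left hconn ⟨hR.some, hR.some_mem⟩ ha
    exact ⟨x, hxZ, (memends_left x v₁).mpr hwx, (rtg_left _ a x).mpr hrtg⟩
  have hconn' : ConnOn G₁ (Subtype.val '' {a | Sum.inl a ∈ C} ∪ {e₁}) := by
    refine connOn_of_hub v₁ ?_
    rintro x (⟨a, ha, rfl⟩ | hx)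
    · obtain ⟨z, hz, hvz, hrtg⟩ := hreach a ha
      exact ⟨z.1, Or.inl ⟨z, hz, rfl⟩, hvz, rtg_mono Set.subset_union_left hrtg⟩
    · rw [Set.mem_singleton_iff] at hx
      subst hx
      exact ⟨x, Or.inr rfl, mem_loop_ends hloop₁, Relation.ReflTransGen.refl⟩
  have htwo' : TwoCycles G₁ (Subtype.val '' {a | Sum.inl a ∈ C} ∪ {e₁}) := by
    refine ⟨{e₁}, Subtype.val '' KL, Set.singleton_subset_iff.mpr (Or.inr rfl),
      (Set.image_mono hKLsub).trans Set.subset_union_left,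
      isCycle_loop hloop₁, (cyc_left KL).mpr hKLcyc, ?_⟩
    intro h
    have he : e₁ ∈ Subtype.val '' KL := h ▸ rfl
    obtain ⟨a, -, ha⟩ := he
    exact a.2 ha
  refine ⟨⟨hconn', htwo'⟩, ?_⟩
  rintro Y hY ⟨hYconn, hYtwo⟩
  by_cases he₁Y : e₁ ∈ Y
  · -- the left part of `Y`, glued back to the right part of `C`, refutes minimality of `C`
    have hY₀sub : Y \ {e₁} ⊆ Subtype.val '' {a | Sum.inl a ∈ C} := by
      rintro x ⟨hxY, hxe⟩
      rcases hY.subset hxY with h | h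
      · exact h
      · exact absurd h hxe
    have hval : Subtype.val '' {a : {a : E₁ // a ≠ e₁} | a.1 ∈ Y} = Y \ {e₁} :=
      val_image_setOf Y
    have hY₀ne : ¬ (Subtype.val '' {a | Sum.inl a ∈ C} ⊆ Y \ {e₁}) := by
      intro hcon
      refine hY.2 ?_
      rintro x (hx | hx)
      · exact (hcon hx).1
      · rw [Set.mem_singleton_iff] at hx
        exact hx ▸ he₁Y
    obtain ⟨w, hwCL, hwY₀⟩ := Set.not_subset.mp hY₀ne
    -- a cycle of `Y` avoiding `e₁`
    obtain ⟨Ka, Kb, hKaY, hKbY, hcKa, hcKb, hKab⟩ := hYtwo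
    have hKpick : ∃ K, K ⊆ Y \ {e₁} ∧ IsCycle G₁ K := by
      by_cases hKa : e₁ ∈ Ka
      · have hKaeq := cycle_of_loop hloop₁ hcKa hKa
        have hKbe : e₁ ∉ Kb := fun hKb =>
          hKab (hKaeq.trans (cycle_of_loop hloop₁ hcKb hKb).symm)
        exact ⟨Kb, fun x hx => ⟨hKbY hx, fun he => hKbe (he ▸ hx)⟩, hcKb⟩
      · exact ⟨Ka, fun x hx => ⟨hKaY hx, fun he => hKa (he ▸ hx)⟩, hcKa⟩
    obtain ⟨K, hKY₀, hcK⟩ := hKpick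
    have hKval : Subtype.val '' {a : {a : E₁ // a ≠ e₁} | a.1 ∈ K} = K := by
      rw [val_image_setOf, Set.diff_singleton_eq_self (fun he => (hKY₀ he).2 rfl)]
    -- the candidate proper subset of `C`
    have hZsub : (Sum.inl '' {a : {a : E₁ // a ≠ e₁} | a.1 ∈ Y} ∪
        Sum.inr '' {b | Sum.inr b ∈ C}) ⊆ C := by
      rintro f (⟨a, ha, rfl⟩ | ⟨b, hb, rfl⟩)
      · obtain ⟨a', ha', heq⟩ := hY₀sub ⟨ha, a.2⟩
        exact Subtype.val_injective heq ▸ ha'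
      · exact hb
    have hZne : ¬ (C ⊆ Sum.inl '' {a : {a : E₁ // a ≠ e₁} | a.1 ∈ Y} ∪
        Sum.inr '' {b | Sum.inr b ∈ C}) := by
      intro hcon
      obtain ⟨aw, hawCL, hawval⟩ := hwCL
      rcases hcon hawCL with ⟨a, haY, heq⟩ | ⟨b, -, heq⟩
      · have haw : a = aw := Sum.inl_injective heq
        exact hwY₀ (hawval ▸ (haw ▸ (⟨haY, a.2⟩ : a.1 ∈ Y \ {e₁})))
      · exact nomatch heq
    have hZconn : ConnOn (loopSum G₁ G₂ e₁ e₂ v₁ v₂)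
        (Sum.inl '' {a : {a : E₁ // a ≠ e₁} | a.1 ∈ Y} ∪
          Sum.inr '' {b | Sum.inr b ∈ C}) := by
      refine connOn_of_hub (Sum.inl v₁) ?_
      rintro f (⟨a, ha, rfl⟩ | ⟨b, hb, rfl⟩)
      · obtain ⟨c, hcY, ⟨ww, hwc, hwe⟩, hrc⟩ :=
          reach_attach (hYconn a.1 ha e₁ he₁Y) a.2 ha
        have hwv : ww = v₁ := eq_of_mem_loop_ends hloop₁ hwe
        rw [← hval] at hrc
        have hcmem : (⟨c, fun h => hcY.2 h⟩ : {a : E₁ // a ≠ e₁}) ∈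
            {a : {a : E₁ // a ≠ e₁} | a.1 ∈ Y} := hcY.1
        refine ⟨Sum.inl ⟨c, fun h => hcY.2 h⟩, Or.inl ⟨_, hcmem, rfl⟩, ?_, ?_⟩
        · exact (memends_left _ v₁).mp (hwv ▸ hwc)
        · exact rtg_mono Set.subset_union_left ((rtg_left _ a _).mp hrc)
      · obtain ⟨x, hxZ, hwx, hrtg⟩ := reach_w0_right hconn ⟨hL.some, hL.some_mem⟩ hb
        exact ⟨Sum.inr x, Or.inr ⟨x, hxZ, rfl⟩, hwx, rtg_mono Set.subset_union_right hrtg⟩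
    have hZtwo : TwoCycles (loopSum G₁ G₂ e₁ e₂ v₁ v₂)
        (Sum.inl '' {a : {a : E₁ // a ≠ e₁} | a.1 ∈ Y} ∪
          Sum.inr '' {b | Sum.inr b ∈ C}) := by
      refine ⟨Sum.inl '' {a : {a : E₁ // a ≠ e₁} | a.1 ∈ K},
        Sum.inr '' KR, ?_, ?_, ?_, hKRcyc, ?_⟩
      · refine (Set.image_mono ?_).trans Set.subset_union_left
        exact fun a ha => (hKY₀ ha).1
      · exact (Set.image_mono hKRsub).trans Set.subset_union_right
      · exact (cyc_left _).mp (hKval.symm ▸ hcK)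
      · intro h
        obtain ⟨k, hk⟩ := hcK.1
        have hkK : k ∈ K := hk
        have : Sum.inl (⟨k, fun he => (hKY₀ hkK).2 he⟩ : {a : E₁ // a ≠ e₁}) ∈
            Sum.inr '' KR := h ▸ ⟨_, hkK, rfl⟩
        obtain ⟨b, -, heq⟩ := this
        exact nomatch heq
    exact hmin _ ⟨hZsub, hZne⟩ ⟨hZconn, hZtwo⟩
  · -- `Y` lives on the left side of `C`
    have hYsub : Y ⊆ Subtype.val '' {a | Sum.inl a ∈ C} := by
      intro x hx
      rcases hY.subset hx with h | h
      · exact h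
      · rw [Set.mem_singleton_iff] at h
        exact absurd (h ▸ hx) he₁Y
    have hval : Subtype.val '' {a : {a : E₁ // a ≠ e₁} | a.1 ∈ Y} = Y := by
      rw [val_image_setOf, Set.diff_singleton_eq_self he₁Y]
    refine hmin (Sum.inl '' {a : {a : E₁ // a ≠ e₁} | a.1 ∈ Y}) ⟨?_, ?_⟩ ⟨?_, ?_⟩
    · rintro f ⟨a, ha, rfl⟩
      obtain ⟨a', ha', heq⟩ := hYsub ha
      exact Subtype.val_injective heq ▸ ha'
    · intro hcon
      obtain ⟨b, -, heq⟩ := hcon hR.some_mem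
      exact nomatch heq
    · exact (conn_left _).mp (hval.symm ▸ hYconn)
    · exact (two_left _).mp (hval.symm ▸ hYtwo)

/-- In a mixed bicycle, the right part plus the loop is a bicycle of `G₂`. -/
lemma mixed_right (hloop₂ : G₂.ends e₂ = s(v₂, v₂))
    {C : Set ({a : E₁ // a ≠ e₁} ⊕ {b : E₂ // b ≠ e₂})}
    (hC : IsBicycle (loopSum G₁ G₂ e₁ e₂ v₁ v₂) C)
    (hL : {a | Sum.inl a ∈ C}.Nonempty) (hR : {b | Sum.inr b ∈ C}.Nonempty) :
    IsBicycle G₂ (Subtype.val '' {b | Sum.inr b ∈ C} ∪ {e₂}) := by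
  obtain ⟨⟨KL, hKLsub, hKLne, hKLcyc⟩, KR, hKRsub, hKRne, hKRcyc⟩ :=
    both_sides_cycle hC hL hR
  obtain ⟨⟨hconn, htwo⟩, hmin⟩ := hC
  have hreach : ∀ b ∈ {b | Sum.inr b ∈ C}, ∃ x ∈ {b | Sum.inr b ∈ C},
      v₂ ∈ G₂.ends x.1 ∧ Relation.ReflTransGen
        (EAdj G₂ (Subtype.val '' {b | Sum.inr b ∈ C})) b.1 x.1 := by
    intro b hb
    obtain ⟨x, hxZ, hwx, hrtg⟩ := reach_w0_right hconn ⟨hL.some, hL.some_mem⟩ hb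
    exact ⟨x, hxZ, (memends_right x).mpr hwx, (rtg_right _ b x).mpr hrtg⟩
  have hconn' : ConnOn G₂ (Subtype.val '' {b | Sum.inr b ∈ C} ∪ {e₂}) := by
    refine connOn_of_hub v₂ ?_
    rintro x (⟨b, hb, rfl⟩ | hx)
    · obtain ⟨z, hz, hvz, hrtg⟩ := hreach b hb
      exact ⟨z.1, Or.inl ⟨z, hz, rfl⟩, hvz, rtg_mono Set.subset_union_left hrtg⟩
    · rw [Set.mem_singleton_iff] at hx
      subst hx
      exact ⟨x, Or.inr rfl, mem_loop_ends hloop₂, Relation.ReflTransGen.refl⟩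
  have htwo' : TwoCycles G₂ (Subtype.val '' {b | Sum.inr b ∈ C} ∪ {e₂}) := by
    refine ⟨{e₂}, Subtype.val '' KR, Set.singleton_subset_iff.mpr (Or.inr rfl),
      (Set.image_mono hKRsub).trans Set.subset_union_left,
      isCycle_loop hloop₂, (cyc_right KR).mpr hKRcyc, ?_⟩
    intro h
    have he : e₂ ∈ Subtype.val '' KR := h ▸ rfl
    obtain ⟨b, -, hb⟩ := he
    exact b.2 hb
  refine ⟨⟨hconn', htwo'⟩, ?_⟩
  rintro Y hY ⟨hYconn, hYtwo⟩
  by_cases he₂Y : e₂ ∈ Y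
  · have hY₀sub : Y \ {e₂} ⊆ Subtype.val '' {b | Sum.inr b ∈ C} := by
      rintro x ⟨hxY, hxe⟩
      rcases hY.subset hxY with h | h
      · exact h
      · exact absurd h hxe
    have hval : Subtype.val '' {b : {b : E₂ // b ≠ e₂} | b.1 ∈ Y} = Y \ {e₂} :=
      val_image_setOf Y
    have hY₀ne : ¬ (Subtype.val '' {b | Sum.inr b ∈ C} ⊆ Y \ {e₂}) := by
      intro hcon
      refine hY.2 ?_
      rintro x (hx | hx)
      · exact (hcon hx).1
      · rw [Set.mem_singleton_iff] at hx
        exact hx ▸ he₂Y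
    obtain ⟨w, hwCR, hwY₀⟩ := Set.not_subset.mp hY₀ne
    obtain ⟨Ka, Kb, hKaY, hKbY, hcKa, hcKb, hKab⟩ := hYtwo
    have hKpick : ∃ K, K ⊆ Y \ {e₂} ∧ IsCycle G₂ K := by
      by_cases hKa : e₂ ∈ Ka
      · have hKaeq := cycle_of_loop hloop₂ hcKa hKa
        have hKbe : e₂ ∉ Kb := fun hKb =>
          hKab (hKaeq.trans (cycle_of_loop hloop₂ hcKb hKb).symm)
        exact ⟨Kb, fun x hx => ⟨hKbY hx, fun he => hKbe (he ▸ hx)⟩, hcKb⟩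
      · exact ⟨Ka, fun x hx => ⟨hKaY hx, fun he => hKa (he ▸ hx)⟩, hcKa⟩
    obtain ⟨K, hKY₀, hcK⟩ := hKpick
    have hKval : Subtype.val '' {b : {b : E₂ // b ≠ e₂} | b.1 ∈ K} = K := by
      rw [val_image_setOf, Set.diff_singleton_eq_self (fun he => (hKY₀ he).2 rfl)]
    have hZsub : (Sum.inl '' {a | Sum.inl a ∈ C} ∪
        Sum.inr '' {b : {b : E₂ // b ≠ e₂} | b.1 ∈ Y}) ⊆ C := by
      rintro f (⟨a, ha, rfl⟩ | ⟨b, hb, rfl⟩)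
      · exact ha
      · obtain ⟨b', hb', heq⟩ := hY₀sub ⟨hb, b.2⟩
        exact Subtype.val_injective heq ▸ hb'
    have hZne : ¬ (C ⊆ Sum.inl '' {a | Sum.inl a ∈ C} ∪
        Sum.inr '' {b : {b : E₂ // b ≠ e₂} | b.1 ∈ Y}) := by
      intro hcon
      obtain ⟨bw, hbwCR, hbwval⟩ := hwCR
      rcases hcon hbwCR with ⟨a, -, heq⟩ | ⟨b, hbY, heq⟩
      · exact nomatch heq
      · have hbw : b = bw := Sum.inr_injective heq
        exact hwY₀ (hbwval ▸ (hbw ▸ (⟨hbY, b.2⟩ : b.1 ∈ Y \ {e₂})))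
    have hZconn : ConnOn (loopSum G₁ G₂ e₁ e₂ v₁ v₂)
        (Sum.inl '' {a | Sum.inl a ∈ C} ∪
          Sum.inr '' {b : {b : E₂ // b ≠ e₂} | b.1 ∈ Y}) := by
      refine connOn_of_hub (Sum.inl v₁) ?_
      rintro f (⟨a, ha, rfl⟩ | ⟨b, hb, rfl⟩)
      · obtain ⟨x, hxZ, hwx, hrtg⟩ := reach_w0_left hconn ⟨hR.some, hR.some_mem⟩ ha
        exact ⟨Sum.inl x, Or.inl ⟨x, hxZ, rfl⟩, hwx, rtg_mono Set.subset_union_left hrtg⟩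
      · obtain ⟨c, hcY, ⟨ww, hwc, hwe⟩, hrc⟩ :=
          reach_attach (hYconn b.1 hb e₂ he₂Y) b.2 hb
        have hwv : ww = v₂ := eq_of_mem_loop_ends hloop₂ hwe
        rw [← hval] at hrc
        have hcmem : (⟨c, fun h => hcY.2 h⟩ : {b : E₂ // b ≠ e₂}) ∈
            {b : {b : E₂ // b ≠ e₂} | b.1 ∈ Y} := hcY.1
        refine ⟨Sum.inr ⟨c, fun h => hcY.2 h⟩, Or.inr ⟨_, hcmem, rfl⟩, ?_, ?_⟩
        · exact (memends_right _).mp (hwv ▸ hwc)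
        · exact rtg_mono Set.subset_union_right ((rtg_right _ b _).mp hrc)
    have hZtwo : TwoCycles (loopSum G₁ G₂ e₁ e₂ v₁ v₂)
        (Sum.inl '' {a | Sum.inl a ∈ C} ∪
          Sum.inr '' {b : {b : E₂ // b ≠ e₂} | b.1 ∈ Y}) := by
      refine ⟨Sum.inl '' KL,
        Sum.inr '' {b : {b : E₂ // b ≠ e₂} | b.1 ∈ K}, ?_, ?_, hKLcyc, ?_, ?_⟩
      · exact (Set.image_mono hKLsub).trans Set.subset_union_left
      · refine (Set.image_mono ?_).trans Set.subset_union_right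
        exact fun b hb => (hKY₀ hb).1
      · exact (cyc_right _).mp (hKval.symm ▸ hcK)
      · intro h
        obtain ⟨k, hk⟩ := hKLne
        have : Sum.inl k ∈ Sum.inr '' {b : {b : E₂ // b ≠ e₂} | b.1 ∈ K} :=
          h ▸ ⟨k, hk, rfl⟩
        obtain ⟨b, -, heq⟩ := this
        exact nomatch heq
    exact hmin _ ⟨hZsub, hZne⟩ ⟨hZconn, hZtwo⟩
  · have hYsub : Y ⊆ Subtype.val '' {b | Sum.inr b ∈ C} := by
      intro x hx
      rcases hY.subset hx with h | h
      · exact h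
      · rw [Set.mem_singleton_iff] at h
        exact absurd (h ▸ hx) he₂Y
    have hval : Subtype.val '' {b : {b : E₂ // b ≠ e₂} | b.1 ∈ Y} = Y := by
      rw [val_image_setOf, Set.diff_singleton_eq_self he₂Y]
    refine hmin (Sum.inr '' {b : {b : E₂ // b ≠ e₂} | b.1 ∈ Y}) ⟨?_, ?_⟩ ⟨?_, ?_⟩
    · rintro f ⟨b, hb, rfl⟩
      obtain ⟨b', hb', heq⟩ := hYsub hb
      exact Subtype.val_injective heq ▸ hb'
    · intro hcon
      obtain ⟨b, -, heq⟩ := hcon hL.some_mem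
      exact nomatch heq
    · exact (conn_right _).mp (hval.symm ▸ hYconn)
    · exact (two_right _).mp (hval.symm ▸ hYtwo)

/-- Glueing two bicycles through their loops gives a bicycle of the loop-sum. -/
lemma glue_bicycle (hloop₁ : G₁.ends e₁ = s(v₁, v₁)) (hloop₂ : G₂.ends e₂ = s(v₂, v₂))
    {C₁ : Set E₁} {C₂ : Set E₂} (hb₁ : IsBicycle G₁ C₁) (hb₂ : IsBicycle G₂ C₂)
    (he₁ : e₁ ∈ C₁) (he₂ : e₂ ∈ C₂) :
    IsBicycle (loopSum G₁ G₂ e₁ e₂ v₁ v₂)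
      (Sum.inl '' {a : {a : E₁ // a ≠ e₁} | a.1 ∈ C₁} ∪
        Sum.inr '' {b : {b : E₂ // b ≠ e₂} | b.1 ∈ C₂}) := by
  have hconn₁ := hb₁.1.1
  have hconn₂ := hb₂.1.1
  have hval₁ : Subtype.val '' {a : {a : E₁ // a ≠ e₁} | a.1 ∈ C₁} = C₁ \ {e₁} :=
    val_image_setOf C₁
  have hval₂ : Subtype.val '' {b : {b : E₂ // b ≠ e₂} | b.1 ∈ C₂} = C₂ \ {e₂} :=
    val_image_setOf C₂
  obtain ⟨K₁, hK₁sub, hcK₁⟩ := exists_cycle_avoiding hloop₁ hb₁.1.2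
  obtain ⟨K₂, hK₂sub, hcK₂⟩ := exists_cycle_avoiding hloop₂ hb₂.1.2
  have hK₁val : Subtype.val '' {a : {a : E₁ // a ≠ e₁} | a.1 ∈ K₁} = K₁ := by
    rw [val_image_setOf, Set.diff_singleton_eq_self (fun he => (hK₁sub he).2 rfl)]
  have hK₂val : Subtype.val '' {b : {b : E₂ // b ≠ e₂} | b.1 ∈ K₂} = K₂ := by
    rw [val_image_setOf, Set.diff_singleton_eq_self (fun he => (hK₂sub he).2 rfl)]
  have hreach₁ : ∀ a : {a : E₁ // a ≠ e₁}, a.1 ∈ C₁ →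
      ∃ x : {a : E₁ // a ≠ e₁}, x.1 ∈ C₁ ∧
        Sum.inl v₁ ∈ (loopSum G₁ G₂ e₁ e₂ v₁ v₂).ends (Sum.inl x) ∧
        Relation.ReflTransGen
          (EAdj (loopSum G₁ G₂ e₁ e₂ v₁ v₂)
            (Sum.inl '' {a : {a : E₁ // a ≠ e₁} | a.1 ∈ C₁}))
          (Sum.inl a) (Sum.inl x) := by
    intro a ha
    obtain ⟨c, hcY, ⟨ww, hwc, hwe⟩, hrc⟩ := reach_attach (hconn₁ a.1 ha e₁ he₁) a.2 ha
    have hwv := eq_of_mem_loop_ends hloop₁ hwe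
    rw [← hval₁] at hrc
    exact ⟨⟨c, fun h => hcY.2 h⟩, hcY.1, (memends_left _ v₁).mp (hwv ▸ hwc),
      (rtg_left _ a _).mp hrc⟩
  have hreach₂ : ∀ b : {b : E₂ // b ≠ e₂}, b.1 ∈ C₂ →
      ∃ x : {b : E₂ // b ≠ e₂}, x.1 ∈ C₂ ∧
        Sum.inl v₁ ∈ (loopSum G₁ G₂ e₁ e₂ v₁ v₂).ends (Sum.inr x) ∧
        Relation.ReflTransGen
          (EAdj (loopSum G₁ G₂ e₁ e₂ v₁ v₂)
            (Sum.inr '' {b : {b : E₂ // b ≠ e₂} | b.1 ∈ C₂}))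
          (Sum.inr b) (Sum.inr x) := by
    intro b hb
    obtain ⟨c, hcY, ⟨ww, hwc, hwe⟩, hrc⟩ := reach_attach (hconn₂ b.1 hb e₂ he₂) b.2 hb
    have hwv := eq_of_mem_loop_ends hloop₂ hwe
    rw [← hval₂] at hrc
    exact ⟨⟨c, fun h => hcY.2 h⟩, hcY.1, (memends_right _).mp (hwv ▸ hwc),
      (rtg_right _ b _).mp hrc⟩
  refine ⟨⟨?_, ?_⟩, ?_⟩
  · -- connectivity through the hub
    refine connOn_of_hub (Sum.inl v₁) ?_
    rintro f (⟨a, ha, rfl⟩ | ⟨b, hb, rfl⟩)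
    · obtain ⟨x, hx, hwx, hrtg⟩ := hreach₁ a ha
      exact ⟨Sum.inl x, Or.inl ⟨x, hx, rfl⟩, hwx, rtg_mono Set.subset_union_left hrtg⟩
    · obtain ⟨x, hx, hwx, hrtg⟩ := hreach₂ b hb
      exact ⟨Sum.inr x, Or.inr ⟨x, hx, rfl⟩, hwx, rtg_mono Set.subset_union_right hrtg⟩
  · -- two cycles, one from each side
    refine ⟨Sum.inl '' {a : {a : E₁ // a ≠ e₁} | a.1 ∈ K₁},
      Sum.inr '' {b : {b : E₂ // b ≠ e₂} | b.1 ∈ K₂}, ?_, ?_, ?_, ?_, ?_⟩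
    · refine Set.Subset.trans (Set.image_mono (f := Sum.inl) ?_) Set.subset_union_left
      exact fun a ha => (hK₁sub ha).1
    · refine Set.Subset.trans (Set.image_mono (f := Sum.inr) ?_) Set.subset_union_right
      exact fun b hb => (hK₂sub hb).1
    · exact (cyc_left _).mp (hK₁val.symm ▸ hcK₁)
    · exact (cyc_right _).mp (hK₂val.symm ▸ hcK₂)
    · intro h
      obtain ⟨k, hk⟩ := hcK₁.1
      have : Sum.inl (⟨k, fun he => (hK₁sub hk).2 he⟩ : {a : E₁ // a ≠ e₁}) ∈
          Sum.inr '' {b : {b : E₂ // b ≠ e₂} | b.1 ∈ K₂} := h ▸ ⟨_, hk, rfl⟩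
      obtain ⟨b, -, heq⟩ := this
      exact nomatch heq
  · -- minimality
    rintro Z hZ ⟨hZconn, hZtwo⟩
    have hZsubL : ∀ {a : {a : E₁ // a ≠ e₁}}, Sum.inl a ∈ Z → a.1 ∈ C₁ := by
      intro a ha
      rcases hZ.subset ha with ⟨a', ha', heq⟩ | ⟨b', -, heq⟩
      · exact Sum.inl_injective heq ▸ ha'
      · exact nomatch heq
    have hZsubR : ∀ {b : {b : E₂ // b ≠ e₂}}, Sum.inr b ∈ Z → b.1 ∈ C₂ := by
      intro b hb
      rcases hZ.subset hb with ⟨a', -, heq⟩ | ⟨b', hb', heq⟩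
      · exact nomatch heq
      · exact Sum.inr_injective heq ▸ hb'
    have hdownL : ∀ {K : Set ({a : E₁ // a ≠ e₁} ⊕ {b : E₂ // b ≠ e₂})}, K ⊆ Z → IsCycle (loopSum G₁ G₂ e₁ e₂ v₁ v₂) K →
        (∀ f ∈ K, ∃ a, f = Sum.inl a) →
        IsCycle G₁ (Subtype.val '' {a | Sum.inl a ∈ K}) ∧
          Subtype.val '' {a | Sum.inl a ∈ K} ⊆ C₁ \ {e₁} := by
      intro K hKZ hcK hKs
      constructor
      · refine (cyc_left (G₂ := G₂) (e₂ := e₂) (v₁ := v₁) (v₂ := v₂) _).mpr ?_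
        rwa [← left_set_eq hKs]
      · rintro x ⟨a, ha, rfl⟩
        exact ⟨hZsubL (hKZ ha), a.2⟩
    have hdownR : ∀ {K : Set ({a : E₁ // a ≠ e₁} ⊕ {b : E₂ // b ≠ e₂})}, K ⊆ Z → IsCycle (loopSum G₁ G₂ e₁ e₂ v₁ v₂) K →
        (∀ f ∈ K, ∃ b, f = Sum.inr b) →
        IsCycle G₂ (Subtype.val '' {b | Sum.inr b ∈ K}) ∧
          Subtype.val '' {b | Sum.inr b ∈ K} ⊆ C₂ \ {e₂} := by
      intro K hKZ hcK hKs
      constructor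
      · refine (cyc_right (G₁ := G₁) (e₁ := e₁) (v₁ := v₁) (v₂ := v₂) _).mpr ?_
        rwa [← right_set_eq hKs]
      · rintro x ⟨b, hb, rfl⟩
        exact ⟨hZsubR (hKZ hb), b.2⟩
    by_cases hZR : {b : {b : E₂ // b ≠ e₂} | Sum.inr b ∈ Z} = ∅
    · -- `Z` lives on the left side
      have hZeq : Z = Sum.inl '' {a | Sum.inl a ∈ Z} := by
        have h := side_split Z
        rw [hZR] at h
        simpa using h
      refine hb₁.2 (Subtype.val '' {a | Sum.inl a ∈ Z}) ⟨?_, ?_⟩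
        ⟨(conn_left _).mpr (hZeq ▸ hZconn), (two_left _).mpr (hZeq ▸ hZtwo)⟩
      · rintro x ⟨a, ha, rfl⟩
        exact hZsubL ha
      · intro hcon
        obtain ⟨a, -, ha⟩ := hcon he₁
        exact a.2 ha
    · by_cases hZL : {a : {a : E₁ // a ≠ e₁} | Sum.inl a ∈ Z} = ∅
      · -- `Z` lives on the right side
        have hZeq : Z = Sum.inr '' {b | Sum.inr b ∈ Z} := by
          have h := side_split Z
          rw [hZL] at h
          simpa using h
        refine hb₂.2 (Subtype.val '' {b | Sum.inr b ∈ Z}) ⟨?_, ?_⟩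
          ⟨(conn_right _).mpr (hZeq ▸ hZconn), (two_right _).mpr (hZeq ▸ hZtwo)⟩
        · rintro x ⟨b, hb, rfl⟩
          exact hZsubR hb
        · intro hcon
          obtain ⟨b, -, hb⟩ := hcon he₂
          exact b.2 hb
      · -- `Z` is mixed
        have hZLne := Set.nonempty_iff_ne_empty.mpr hZL
        have hZRne := Set.nonempty_iff_ne_empty.mpr hZR
        obtain ⟨Ka, Kb, hKaZ, hKbZ, hcKa, hcKb, hKab⟩ := hZtwo
        have hsa := cycle_one_side hcKa
        have hsb := cycle_one_side hcKb
        -- refuting minimality of `C₁` given a left-sided cycle of `Z`,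
        -- provided the left side of `Z` is proper
        have hcaseL : ∀ {K : Set ({a : E₁ // a ≠ e₁} ⊕ {b : E₂ // b ≠ e₂})}, K ⊆ Z → IsCycle (loopSum G₁ G₂ e₁ e₂ v₁ v₂) K →
            (∀ f ∈ K, ∃ a, f = Sum.inl a) →
            ¬ (Sum.inl '' {a : {a : E₁ // a ≠ e₁} | a.1 ∈ C₁} ⊆ Z) → False := by
          intro K hKZ hcK hKs hnsub
          obtain ⟨f, hfS, hfZ⟩ := Set.not_subset.mp hnsub
          obtain ⟨aw, hawC, rfl⟩ := hfS
          obtain ⟨hcycK, hKsub⟩ := hdownL hKZ hcK hKs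
          refine hb₁.2 (Subtype.val '' {a | Sum.inl a ∈ Z} ∪ {e₁}) ⟨?_, ?_⟩ ⟨?_, ?_⟩
          · rintro x (⟨a, ha, rfl⟩ | hx)
            · exact hZsubL ha
            · rw [Set.mem_singleton_iff] at hx
              exact hx ▸ he₁
          · intro hcon
            rcases hcon hawC with ⟨a, ha, heq⟩ | hx
            · exact hfZ (Subtype.val_injective heq ▸ ha)
            · exact aw.2 hx
          · -- connectivity via the hub
            refine connOn_of_hub v₁ ?_
            rintro x (⟨a, ha, rfl⟩ | hx)
            · obtain ⟨x', hx'Z, hwx, hrtg⟩ := reach_w0_left hZconn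
                ⟨hZRne.some, hZRne.some_mem⟩ ha
              exact ⟨x'.1, Or.inl ⟨x', hx'Z, rfl⟩, (memends_left x' v₁).mpr hwx,
                rtg_mono Set.subset_union_left ((rtg_left _ a x').mpr hrtg)⟩
            · rw [Set.mem_singleton_iff] at hx
              subst hx
              exact ⟨x, Or.inr rfl, mem_loop_ends hloop₁, Relation.ReflTransGen.refl⟩
          · -- two cycles
            refine ⟨{e₁}, Subtype.val '' {a | Sum.inl a ∈ K},
              Set.singleton_subset_iff.mpr (Or.inr rfl), ?_, isCycle_loop hloop₁,
              hcycK, ?_⟩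
            · refine (Set.image_mono ?_).trans Set.subset_union_left
              exact fun a ha => hKZ ha
            · intro h
              have he : e₁ ∈ Subtype.val '' {a | Sum.inl a ∈ K} := h ▸ rfl
              obtain ⟨a, -, ha⟩ := he
              exact a.2 ha
        have hcaseR : ∀ {K : Set ({a : E₁ // a ≠ e₁} ⊕ {b : E₂ // b ≠ e₂})}, K ⊆ Z → IsCycle (loopSum G₁ G₂ e₁ e₂ v₁ v₂) K →
            (∀ f ∈ K, ∃ b, f = Sum.inr b) →
            ¬ (Sum.inr '' {b : {b : E₂ // b ≠ e₂} | b.1 ∈ C₂} ⊆ Z) → False := by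
          intro K hKZ hcK hKs hnsub
          obtain ⟨f, hfS, hfZ⟩ := Set.not_subset.mp hnsub
          obtain ⟨bw, hbwC, rfl⟩ := hfS
          obtain ⟨hcycK, hKsub⟩ := hdownR hKZ hcK hKs
          refine hb₂.2 (Subtype.val '' {b | Sum.inr b ∈ Z} ∪ {e₂}) ⟨?_, ?_⟩ ⟨?_, ?_⟩
          · rintro x (⟨b, hb, rfl⟩ | hx)
            · exact hZsubR hb
            · rw [Set.mem_singleton_iff] at hx
              exact hx ▸ he₂
          · intro hcon
            rcases hcon hbwC with ⟨b, hb, heq⟩ | hx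
            · exact hfZ (Subtype.val_injective heq ▸ hb)
            · exact bw.2 hx
          · refine connOn_of_hub v₂ ?_
            rintro x (⟨b, hb, rfl⟩ | hx)
            · obtain ⟨x', hx'Z, hwx, hrtg⟩ := reach_w0_right hZconn
                ⟨hZLne.some, hZLne.some_mem⟩ hb
              exact ⟨x'.1, Or.inl ⟨x', hx'Z, rfl⟩, (memends_right x').mpr hwx,
                rtg_mono Set.subset_union_left ((rtg_right _ b x').mpr hrtg)⟩
            · rw [Set.mem_singleton_iff] at hx
              subst hx
              exact ⟨x, Or.inr rfl, mem_loop_ends hloop₂, Relation.ReflTransGen.refl⟩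
          · refine ⟨{e₂}, Subtype.val '' {b | Sum.inr b ∈ K},
              Set.singleton_subset_iff.mpr (Or.inr rfl), ?_, isCycle_loop hloop₂,
              hcycK, ?_⟩
            · refine (Set.image_mono ?_).trans Set.subset_union_left
              exact fun b hb => hKZ hb
            · intro h
              have he : e₂ ∈ Subtype.val '' {b | Sum.inr b ∈ K} := h ▸ rfl
              obtain ⟨b, -, hb⟩ := he
              exact b.2 hb
        -- one of the two sides of `Z` must be proper
        have hproper : ¬ (Sum.inl '' {a : {a : E₁ // a ≠ e₁} | a.1 ∈ C₁} ⊆ Z) ∨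
            ¬ (Sum.inr '' {b : {b : E₂ // b ≠ e₂} | b.1 ∈ C₂} ⊆ Z) := by
          by_contra hcon
          push_neg at hcon
          exact hZ.2 (Set.union_subset hcon.1 hcon.2)
        -- two same-sided cycles contradict `loop_bicycle_unique_cycle`
        have hbothL : (∀ f ∈ Ka, ∃ a, f = Sum.inl a) →
            (∀ f ∈ Kb, ∃ a, f = Sum.inl a) → False := by
          intro h1 h2
          obtain ⟨hc1, hs1⟩ := hdownL hKaZ hcKa h1
          obtain ⟨hc2, hs2⟩ := hdownL hKbZ hcKb h2
          refine loop_bicycle_unique_cycle hloop₁ hb₁ he₁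
            ⟨_, _, hs1, hs2, hc1, hc2, ?_⟩
          intro heq
          refine hKab ?_
          rw [left_set_eq h1, left_set_eq h2]
          exact congrArg (Set.image Sum.inl)
            (Set.image_injective.mpr Subtype.val_injective heq)
        have hbothR : (∀ f ∈ Ka, ∃ b, f = Sum.inr b) →
            (∀ f ∈ Kb, ∃ b, f = Sum.inr b) → False := by
          intro h1 h2
          obtain ⟨hc1, hs1⟩ := hdownR hKaZ hcKa h1
          obtain ⟨hc2, hs2⟩ := hdownR hKbZ hcKb h2
          refine loop_bicycle_unique_cycle hloop₂ hb₂ he₂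
            ⟨_, _, hs1, hs2, hc1, hc2, ?_⟩
          intro heq
          refine hKab ?_
          rw [right_set_eq h1, right_set_eq h2]
          exact congrArg (Set.image Sum.inr)
            (Set.image_injective.mpr Subtype.val_injective heq)
        rcases hsa with ha | ha <;> rcases hsb with hb | hb
        · exact hbothL ha hb
        · rcases hproper with hp | hp
          · exact hcaseL hKaZ hcKa ha hp
          · exact hcaseR hKbZ hcKb hb hp
        · rcases hproper with hp | hp
          · exact hcaseL hKbZ hcKb hb hp
          · exact hcaseR hKaZ hcKa ha hp
        · exact hbothR ha hb

/-- Bicycles of the loop-sum are exactly the two-sum circuits. -/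
theorem isBicycle_loopSum_iff (hloop₁ : G₁.ends e₁ = s(v₁, v₁))
    (hloop₂ : G₂.ends e₂ = s(v₂, v₂))
    (C : Set ({a : E₁ // a ≠ e₁} ⊕ {b : E₂ // b ≠ e₂})) :
    IsBicycle (loopSum G₁ G₂ e₁ e₂ v₁ v₂) C ↔
      ((∃ C₁, IsBicycle G₁ C₁ ∧ e₁ ∉ C₁ ∧ C = liftL e₁ e₂ C₁) ∨
       (∃ C₂, IsBicycle G₂ C₂ ∧ e₂ ∉ C₂ ∧ C = liftR e₁ e₂ C₂) ∨
       (∃ C₁ C₂, IsBicycle G₁ C₁ ∧ IsBicycle G₂ C₂ ∧ e₁ ∈ C₁ ∧ e₂ ∈ C₂ ∧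
         C = liftL e₁ e₂ C₁ ∪ liftR e₁ e₂ C₂)) := by
  constructor
  · intro hC
    by_cases hR : {b : {b : E₂ // b ≠ e₂} | Sum.inr b ∈ C} = ∅
    · left
      have hCeq : C = Sum.inl '' {a | Sum.inl a ∈ C} := by
        have h := side_split C
        rw [hR] at h
        simpa using h
      refine ⟨Subtype.val '' {a | Sum.inl a ∈ C}, ?_, ?_, ?_⟩
      · exact (bike_left _).mpr (hCeq ▸ hC)
      · rintro ⟨a, -, ha⟩
        exact a.2 ha
      · rw [liftL_eq, val_preim_image]
        exact hCeq
    · by_cases hL : {a : {a : E₁ // a ≠ e₁} | Sum.inl a ∈ C} = ∅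
      · right; left
        have hCeq : C = Sum.inr '' {b | Sum.inr b ∈ C} := by
          have h := side_split C
          rw [hL] at h
          simpa using h
        refine ⟨Subtype.val '' {b | Sum.inr b ∈ C}, ?_, ?_, ?_⟩
        · exact (bike_right _).mpr (hCeq ▸ hC)
        · rintro ⟨b, -, hb⟩
          exact b.2 hb
        · rw [liftR_eq, val_preim_image]
          exact hCeq
      · right; right
        have hLne := Set.nonempty_iff_ne_empty.mpr hL
        have hRne := Set.nonempty_iff_ne_empty.mpr hR
        refine ⟨Subtype.val '' {a | Sum.inl a ∈ C} ∪ {e₁},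
          Subtype.val '' {b | Sum.inr b ∈ C} ∪ {e₂},
          mixed_left hloop₁ hC hLne hRne, mixed_right hloop₂ hC hLne hRne,
          Or.inr rfl, Or.inr rfl, ?_⟩
        rw [liftL_eq, liftR_eq]
        have h1 : {a : {a : E₁ // a ≠ e₁} |
            a.1 ∈ Subtype.val '' {a | Sum.inl a ∈ C} ∪ {e₁}} = {a | Sum.inl a ∈ C} := by
          ext a
          simp only [Set.mem_setOf_eq, Set.mem_union, Set.mem_singleton_iff]
          constructor
          · rintro (h | h)
            · exact Subtype.val_injective.mem_set_image.mp h
            · exact absurd h a.2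
          · exact fun h => Or.inl ⟨a, h, rfl⟩
        have h2 : {b : {b : E₂ // b ≠ e₂} |
            b.1 ∈ Subtype.val '' {b | Sum.inr b ∈ C} ∪ {e₂}} = {b | Sum.inr b ∈ C} := by
          ext b
          simp only [Set.mem_setOf_eq, Set.mem_union, Set.mem_singleton_iff]
          constructor
          · rintro (h | h)
            · exact Subtype.val_injective.mem_set_image.mp h
            · exact absurd h b.2
          · exact fun h => Or.inl ⟨b, h, rfl⟩
        rw [h1, h2]
        exact side_split C
  · rintro (⟨C₁, hb₁, he₁, rfl⟩ | ⟨C₂, hb₂, he₂, rfl⟩ | ⟨C₁, C₂, hb₁, hb₂, he₁, he₂, rfl⟩)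
    · rw [liftL_eq]
      refine (bike_left _).mp ?_
      rwa [val_image_setOf, Set.diff_singleton_eq_self he₁]
    · rw [liftR_eq]
      refine (bike_right _).mp ?_
      rwa [val_image_setOf, Set.diff_singleton_eq_self he₂]
    · rw [liftL_eq, liftR_eq]
      exact glue_bicycle hloop₁ hloop₂ hb₁ hb₂ he₁ he₂

end Fin

end LoopSum

end Bicirc

open Bicirc in
theorem stmt16 {V₁ E₁ V₂ E₂ : Type*}
    [Fintype V₁] [Fintype E₁] [Fintype V₂] [Fintype E₂]
    (G₁ : MGraph V₁ E₁) (G₂ : MGraph V₂ E₂) (e₁ : E₁) (e₂ : E₂) (v₁ : V₁) (v₂ : V₂)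
    (hloop₁ : G₁.ends e₁ = s(v₁, v₁)) (hloop₂ : G₂.ends e₂ = s(v₂, v₂))
    (M₁ : Matroid E₁) (M₂ : Matroid E₂)
    (h₁ : IsBicircOf G₁ M₁) (h₂ : IsBicircOf G₂ M₂)
    (hs₁ : ¬ SepElem M₁ e₁) (hs₂ : ¬ SepElem M₂ e₂)
    (M : Matroid ({a : E₁ // a ≠ e₁} ⊕ {b : E₂ // b ≠ e₂}))
    (hM : IsBicircOf (loopSum G₁ G₂ e₁ e₂ v₁ v₂) M) :
    ∀ C, Circ M C ↔ TwoSumCirc M₁ M₂ e₁ e₂ C := by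
  intro C
  rw [hM.2 C, TwoSumCirc]
  simp only [h₁.2, h₂.2]
  exact isBicycle_loopSum_iff hloop₁ hloop₂ C
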